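/- arXiv:1908.07616 — 8 statements merged into one kernel-verified Lean document; each statement's English description precedes it below -/
import Mathlib

section
/- Let (ξ_j)_{j≥0} be nonnegative real-valued random variables with partial sums S_0 = 0, S_n = ξ_0 + ... + ξ_{n-1}. Suppose there exist a constant c > 0 and a function g : ℕ → (0,∞) with ∑_{n≥1} 1/g(n) = ∞ such that P(limsup_{n→∞} S_n/g(n) ≤ c) = 1. Then for every integer k ≥ 1 and every real d ≥ 1, lim_{n→∞} E[ ∏_{i=0}^{n-1} (1 - 1/(d + S_i))^k ] = 0. -/
open MeasureTheory Filter Finset ProbabilityTheory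

/-- If `1/g` is not summable (with `g > 0`), then for `d ≥ 1` and `c > 0`,
`1/(d + (c+1) g n)` is not summable either. -/
lemma aux_not_summable_shifted (c d : ℝ) (hc : 0 < c) (hd : 1 ≤ d)
    (g : ℕ → ℝ) (hg : ∀ n, 0 < g n) (hgdiv : ¬ Summable (fun n => 1 / g n)) :
    ¬ Summable (fun n => 1 / (d + (c + 1) * g n)) := by
  intro hsum
  apply hgdiv
  have hpos : ∀ n, 0 < d + (c + 1) * g n := fun n => by nlinarith [hg n, hc]
  -- terms tend to 0, hence eventually g n ≥ d
  have h0 : Filter.Tendsto (fun n => 1 / (d + (c + 1) * g n)) atTop (nhds 0) :=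
    hsum.tendsto_atTop_zero
  have hev : ∀ᶠ n in atTop, 1 / (d + (c + 1) * g n) < 1 / (d * (c + 2)) := by
    have hp : (0:ℝ) < 1 / (d * (c + 2)) := by
      have : (0:ℝ) < d * (c + 2) := by nlinarith
      positivity
    exact h0.eventually (eventually_lt_nhds hp)
  have hev' : ∀ᶠ n in atTop, 1 / g n ≤ (c + 2) * (1 / (d + (c + 1) * g n)) := by
    filter_upwards [hev] with n hn
    rw [div_lt_div_iff₀ (hpos n) (by nlinarith : (0:ℝ) < d * (c + 2))] at hn
    have hgd : d ≤ g n := by nlinarith [hg n, hc]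
    rw [mul_one_div, div_le_div_iff₀ (hg n) (hpos n)]
    nlinarith [hg n]
  obtain ⟨N, hN⟩ := hev'.exists_forall_of_atTop
  have hshift : Summable (fun n => 1 / g (n + N)) := by
    apply Summable.of_nonneg_of_le (fun n => one_div_nonneg.mpr (hg _).le)
      (fun n => hN (n + N) (Nat.le_add_left _ _))
    exact (Summable.mul_left _ ((summable_nat_add_iff N).mpr hsum))
  exact (summable_nat_add_iff N).mp hshift

/-- analytic core of Lemma 3.2(i).
If the environment `ξ` satisfies condition (S), i.e. there are `c > 0` and a positive
function `g` with non-summable inverse such that almost surely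
`limsup_n S_n / g(n) ≤ c`, then for every integer `k ≥ 1` and real `d ≥ 1`,
`E[∏_{i=0}^{n-1} (1 - 1/(d + S_i))^k] → 0` as `n → ∞`. -/
theorem tbrw_trap_exit_prob_tendsto_zero
    {Ω : Type*} [MeasurableSpace Ω] (P : Measure Ω) [IsProbabilityMeasure P]
    (ξ : ℕ → Ω → ℝ) (hmeas : ∀ j, Measurable (ξ j)) (hnonneg : ∀ j ω, 0 ≤ ξ j ω)
    (c : ℝ) (hc : 0 < c) (g : ℕ → ℝ) (hg : ∀ n, 0 < g n)
    (hgdiv : ¬ Summable (fun n => 1 / g n))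
    (hS : P {ω | Filter.limsup
        (fun n => (((∑ j ∈ Finset.range n, ξ j ω) / g n : ℝ) : EReal)) Filter.atTop
        ≤ (c : EReal)} = 1) :
    ∀ k : ℕ, 1 ≤ k → ∀ d : ℝ, 1 ≤ d →
      Filter.Tendsto
        (fun n => ∫ ω, ∏ i ∈ Finset.range n,
          (1 - 1 / (d + ∑ j ∈ Finset.range i, ξ j ω)) ^ k ∂P)
        Filter.atTop (nhds 0) := by
  intro k hk d hd
  set S : ℕ → Ω → ℝ := fun n ω => ∑ j ∈ Finset.range n, ξ j ω with hSdef
  have hSnonneg : ∀ n ω, 0 ≤ S n ω := fun n ω =>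
    Finset.sum_nonneg fun j _ => hnonneg j ω
  have hSmeas : ∀ n, Measurable (S n) := fun n =>
    Finset.measurable_sum _ fun j _ => hmeas j
  have hden : ∀ n ω, 1 ≤ d + S n ω := fun n ω =>
    le_add_of_le_of_nonneg hd (hSnonneg n ω)
  have hupos : ∀ n ω, 0 < 1 / (d + S n ω) := fun n ω =>
    div_pos one_pos (lt_of_lt_of_le one_pos (hden n ω))
  have hule : ∀ n ω, 1 / (d + S n ω) ≤ 1 := fun n ω => by
    rw [div_le_one (lt_of_lt_of_le one_pos (hden n ω))]; exact hden n ω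
  set F : ℕ → Ω → ℝ := fun n ω =>
    ∏ i ∈ Finset.range n, (1 - 1 / (d + S i ω)) ^ k with hFdef
  have hF0 : ∀ n ω, 0 ≤ F n ω := fun n ω =>
    Finset.prod_nonneg fun i _ => pow_nonneg (by linarith [hule i ω]) k
  have hF1 : ∀ n ω, F n ω ≤ 1 := fun n ω =>
    Finset.prod_le_one (fun i _ => pow_nonneg (by linarith [hule i ω]) k)
      (fun i _ => pow_le_one₀ (by linarith [hule i ω]) (by linarith [hupos i ω]))
  have hFmeas : ∀ n, Measurable (F n) := fun n =>
    Finset.measurable_prod _ fun i _ =>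
      ((measurable_const.sub ((measurable_const.add (hSmeas i)).const_div 1)).pow_const k)
  -- the event has full measure: a.e. statement
  have hEmeas : MeasurableSet {ω | Filter.limsup
      (fun n => (((S n ω) / g n : ℝ) : EReal)) Filter.atTop ≤ (c : EReal)} := by
    apply measurableSet_le _ measurable_const
    apply Measurable.limsup
    intro n
    exact (measurable_coe_real_ereal).comp ((hSmeas n).div_const (g n))
  have hae : ∀ᵐ ω ∂P, Filter.limsup
      (fun n => (((S n ω) / g n : ℝ) : EReal)) Filter.atTop ≤ (c : EReal) := by
    rw [ae_iff]
    have := measure_compl hEmeas (measure_ne_top P _)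
    simp only [hS, measure_univ] at this
    simpa [Set.compl_setOf] using this.trans (by rw [tsub_eq_zero_iff_le]; exact le_of_eq hS.symm)
  -- a.e. pointwise convergence of F to 0
  have hconv : ∀ᵐ ω ∂P, Filter.Tendsto (fun n => F n ω) atTop (nhds 0) := by
    filter_upwards [hae] with ω hω
    -- eventually S n ω ≤ (c+1) g n
    have hcc : (c : EReal) < ((c + 1 : ℝ) : EReal) := by
      exact_mod_cast (by linarith : c < c + 1)
    have hlt : ∀ᶠ n in atTop, (((S n ω) / g n : ℝ) : EReal) < ((c + 1 : ℝ) : EReal) :=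
      eventually_lt_of_limsup_lt (lt_of_le_of_lt hω hcc)
    have hSle : ∀ᶠ n in atTop, S n ω ≤ (c + 1) * g n := by
      filter_upwards [hlt] with n hn
      have h1 : (S n ω) / g n < c + 1 := by exact_mod_cast hn
      have h2 := (div_lt_iff₀ (hg n)).mp h1
      linarith
    obtain ⟨N, hN⟩ := hSle.exists_forall_of_atTop
    -- the sum of 1/(d+S n ω) diverges
    have hnotsum : ¬ Summable (fun n => 1 / (d + S n ω)) := by
      intro hsum
      apply aux_not_summable_shifted c d hc hd g hg hgdiv
      rw [← summable_nat_add_iff N]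
      apply Summable.of_nonneg_of_le
        (fun n => one_div_nonneg.mpr (by nlinarith [hg (n + N), hc]))
        (fun n => ?_) ((summable_nat_add_iff N).mpr hsum)
      apply one_div_le_one_div_of_le (lt_of_lt_of_le one_pos (hden (n + N) ω))
      have := hN (n + N) (Nat.le_add_left _ _)
      linarith
    have hT : Filter.Tendsto (fun n => ∑ i ∈ Finset.range n, 1 / (d + S i ω))
        atTop atTop :=
      (not_summable_iff_tendsto_nat_atTop_of_nonneg
        (fun i => le_of_lt (hupos i ω))).mp hnotsum
    -- bound F by exp(-partial sum)
    have hFle : ∀ n, F n ω ≤ Real.exp (-(∑ i ∈ Finset.range n, 1 / (d + S i ω))) := by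
      intro n
      have hle : F n ω ≤ ∏ i ∈ Finset.range n, Real.exp (-(1 / (d + S i ω))) := by
        apply Finset.prod_le_prod
        · intro i _; exact pow_nonneg (by linarith [hule i ω]) k
        · intro i _
          calc (1 - 1 / (d + S i ω)) ^ k ≤ (1 - 1 / (d + S i ω)) ^ 1 :=
                pow_le_pow_of_le_one (by linarith [hule i ω])
                  (by linarith [hupos i ω]) hk
            _ = 1 - 1 / (d + S i ω) := pow_one _
            _ ≤ Real.exp (-(1 / (d + S i ω))) := by
                have := Real.add_one_le_exp (-(1 / (d + S i ω)))
                linarith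
      rw [← Real.exp_sum, Finset.sum_neg_distrib] at hle
      exact hle
    have hexp : Filter.Tendsto
        (fun n => Real.exp (-(∑ i ∈ Finset.range n, 1 / (d + S i ω))))
        atTop (nhds 0) :=
      Real.tendsto_exp_atBot.comp (tendsto_neg_atTop_atBot.comp hT)
    exact squeeze_zero (fun n => hF0 n ω) hFle hexp
  -- dominated convergence
  have hmain := MeasureTheory.tendsto_integral_of_dominated_convergence
    (F := F) (f := fun _ => (0:ℝ)) (bound := fun _ => (1:ℝ)) (μ := P)
    (fun n => (hFmeas n).aestronglyMeasurable)
    (integrable_const 1)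
    (fun n => Filter.Eventually.of_forall fun ω => by
      rw [Real.norm_eq_abs, abs_of_nonneg (hF0 n ω)]
      exact hF1 n ω)
    hconv
  rw [MeasureTheory.integral_zero] at hmain
  exact hmain
end

section
/- Let (ξ_j)_{j≥0} be nonnegative real-valued random variables with partial sums S_0 = 0, S_n = ξ_0 + ... + ξ_{n-1}. Suppose there exist a constant c > 0 and a function f : ℕ → (0,∞) with ∑_{n≥1} 1/f(n) < ∞ such that P(liminf_{n→∞} S_n/f(n) ≥ c) = 1. Then for every integer k ≥ 1 there exists a constant C > 0, depending only on k, c, f and the joint law of (ξ_j), such that for all integers d > ℓ ≥ 1, lim_{n→∞} E[ ∏_{i=0}^{n-1} (1 - (d-ℓ)/(d + S_i))^k ] ≥ e^{-C(d-ℓ)} > 0. -/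
open MeasureTheory Filter Finset ProbabilityTheory
open scoped ENNReal NNReal

private lemma exp_key (a s : ℝ) (ha : 0 ≤ a) (hs : 0 < s) :
    Real.exp (-(a / s)) ≤ 1 - a / (s + a) := by
  have h1 : (0:ℝ) < s + a := by linarith
  have h2 : Real.exp (-(a/s)) ≤ (1 + a/s)⁻¹ := by
    rw [Real.exp_neg]
    have := Real.add_one_le_exp (a/s)
    have hpos : (0:ℝ) < 1 + a/s := by positivity
    exact inv_anti₀ hpos (by linarith)
  have h3 : (1 + a/s)⁻¹ = 1 - a/(s+a) := by
    rw [show (1:ℝ) + a/s = (s+a)/s by field_simp]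
    rw [inv_div]
    field_simp
    ring
  linarith [h2, h3.le, h3.ge]

/-- analytic core of Lemma 3.2(ii).
If the environment `ξ` satisfies condition (I), i.e. there are `c > 0` and a positive
function `f` with summable inverse such that almost surely `liminf_n S_n / f(n) ≥ c`,
then for every integer `k ≥ 1` there is a constant `C > 0` such that for all integers
`d > ℓ ≥ 1`, the (existing, monotone) limit of
`E[∏_{i=0}^{n-1} (1 - (d-ℓ)/(d + S_i))^k]` is at least `e^{-C(d-ℓ)} > 0`. -/
theorem tbrw_trap_prob_positive_limit
    {Ω : Type*} [MeasurableSpace Ω] (P : Measure Ω) [IsProbabilityMeasure P]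
    (ξ : ℕ → Ω → ℝ) (hmeas : ∀ j, Measurable (ξ j)) (hnonneg : ∀ j ω, 0 ≤ ξ j ω)
    (c : ℝ) (hc : 0 < c) (f : ℕ → ℝ) (hf : ∀ n, 0 < f n)
    (hfsum : Summable (fun n => 1 / f n))
    (hI : P {ω | (c : EReal) ≤ Filter.liminf
        (fun n => (((∑ j ∈ Finset.range n, ξ j ω) / f n : ℝ) : EReal)) Filter.atTop} = 1) :
    ∀ k : ℕ, 1 ≤ k →
      ∃ C : ℝ, 0 < C ∧ ∀ d ℓ : ℕ, 1 ≤ ℓ → ℓ < d →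
        ∃ L : ℝ,
          Filter.Tendsto
            (fun n => ∫ ω, ∏ i ∈ Finset.range n,
              (1 - ((d : ℝ) - ℓ) / ((d : ℝ) + ∑ j ∈ Finset.range i, ξ j ω)) ^ k ∂P)
            Filter.atTop (nhds L) ∧
          Real.exp (-C * ((d : ℝ) - ℓ)) ≤ L := by
  intro k hk
  set S : ℕ → Ω → ℝ := fun n ω => ∑ j ∈ Finset.range n, ξ j ω with hSdef
  have hSmeas : ∀ n, Measurable (S n) := fun n =>
    Finset.measurable_sum _ (fun j _ => hmeas j)
  have hSnonneg : ∀ n ω, 0 ≤ S n ω := fun n ω =>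
    Finset.sum_nonneg fun j _ => hnonneg j ω
  -- events A N
  set A : ℕ → Set Ω := fun N => {ω | ∀ n, N ≤ n → c/2 * f n ≤ S n ω} with hAdef
  have hAmeas : ∀ N, MeasurableSet (A N) := by
    intro N
    have : A N = ⋂ n, ⋂ _ : N ≤ n, {ω | c/2 * f n ≤ S n ω} := by
      ext ω; simp [hAdef, Set.mem_iInter]
    rw [this]
    exact MeasurableSet.iInter fun n => MeasurableSet.iInter fun _ =>
      measurableSet_le measurable_const (hSmeas n)
  have hAmono : Monotone A := fun M N h ω hω n hn => hω n (h.trans hn)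
  -- good event ⊆ ⋃ A N
  have hsub : {ω | (c : EReal) ≤ Filter.liminf
        (fun n => (((∑ j ∈ Finset.range n, ξ j ω) / f n : ℝ) : EReal)) Filter.atTop}
      ⊆ ⋃ N, A N := by
    intro ω hω
    have hlt : ((c/2 : ℝ) : EReal) < Filter.liminf
        (fun n => (((S n ω) / f n : ℝ) : EReal)) Filter.atTop := by
      refine lt_of_lt_of_le ?_ hω
      exact_mod_cast EReal.coe_lt_coe_iff.mpr (by linarith)
    have hev := Filter.eventually_lt_of_lt_liminf hlt
    rw [Filter.eventually_atTop] at hev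
    obtain ⟨N, hN⟩ := hev
    refine Set.mem_iUnion.mpr ⟨N, fun n hn => ?_⟩
    have := hN n hn
    have hlt' : c/2 < S n ω / f n := by exact_mod_cast this
    have := (lt_div_iff₀ (hf n)).mp hlt'
    linarith
  have hUnion : P (⋃ N, A N) = 1 := by
    refine le_antisymm prob_le_one ?_
    calc (1:ℝ≥0∞) = P _ := hI.symm
    _ ≤ P (⋃ N, A N) := measure_mono hsub
  -- choose N with P (A N) > 1/2
  obtain ⟨N, hN⟩ : ∃ N, (1:ℝ≥0∞)/2 < P (A N) := by
    have := Directed.measure_iUnion (μ := P) (s := A) (hAmono.directed_le)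
    rw [hUnion] at this
    have h2 : (1:ℝ≥0∞)/2 < ⨆ N, P (A N) := by
      rw [← this]; norm_num
    exact lt_iSup_iff.mp h2
  -- constants
  set T : ℝ := ∑' n, 1 / f n with hTdef
  have hT0 : 0 ≤ T := tsum_nonneg fun n => one_div_nonneg.mpr (hf n).le
  have hCpos : (0:ℝ) < k * N + 2 * k * T / c + Real.log 2 := by
    have hl2 : (0:ℝ) < Real.log 2 := Real.log_pos (by norm_num)
    have h1 : (0:ℝ) ≤ (k:ℝ) * N := by positivity
    have h2 : (0:ℝ) ≤ 2 * k * T / c :=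
      div_nonneg (mul_nonneg (by positivity) hT0) hc.le
    linarith
  refine ⟨k * N + 2 * k * T / c + Real.log 2, hCpos, ?_⟩
  intro d ℓ hℓ hd
  have hdl : (0:ℝ) < (d:ℝ) - ℓ := by
    have : (ℓ:ℝ) < d := by exact_mod_cast hd
    linarith
  have hℓ1 : (1:ℝ) ≤ (ℓ:ℝ) := by exact_mod_cast hℓ
  set a : ℝ := (d:ℝ) - ℓ with hadef
  -- the integrand
  set g : ℕ → Ω → ℝ := fun n ω => ∏ i ∈ Finset.range n,
      (1 - a / ((d:ℝ) + S i ω)) ^ k with hgdef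
  have hden : ∀ i ω, (0:ℝ) < (d:ℝ) + S i ω := fun i ω => by
    have := hSnonneg i ω; have : (0:ℝ) ≤ S i ω := this
    have hd1 : (1:ℝ) ≤ (d:ℝ) := by
      have : (1:ℕ) ≤ d := le_of_lt (lt_of_le_of_lt hℓ hd)
      exact_mod_cast this
    linarith
  -- factor bounds
  have hfac01 : ∀ i ω, 0 ≤ 1 - a / ((d:ℝ) + S i ω) ∧ 1 - a / ((d:ℝ) + S i ω) ≤ 1 := by
    intro i ω
    have h1 : a / ((d:ℝ) + S i ω) ≤ 1 := by
      rw [div_le_one (hden i ω)]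
      have := hSnonneg i ω
      simp only [hadef]; linarith
    have h2 : 0 ≤ a / ((d:ℝ) + S i ω) := div_nonneg hdl.le (hden i ω).le
    constructor <;> linarith
  have hg01 : ∀ n ω, 0 ≤ g n ω ∧ g n ω ≤ 1 := by
    intro n ω
    constructor
    · exact Finset.prod_nonneg fun i _ => pow_nonneg (hfac01 i ω).1 k
    · exact Finset.prod_le_one (fun i _ => pow_nonneg (hfac01 i ω).1 k)
        (fun i _ => pow_le_one₀ (hfac01 i ω).1 (hfac01 i ω).2)
  -- the lower bound constant on the event A N
  set b : ℝ := Real.exp (-(k:ℝ) * (a * (N + 2*T/c))) with hbdef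
  -- pointwise bound on A N
  have hptwise : ∀ ω ∈ A N, ∀ n, b ≤ g n ω := by
    intro ω hω n
    -- per factor: exp(-(a/(ℓ+S i ω))) ≤ 1 - a/(d+S i ω)
    have hfac : ∀ i, Real.exp (-(a / ((ℓ:ℝ) + S i ω))) ≤ 1 - a / ((d:ℝ) + S i ω) := by
      intro i
      have hs : (0:ℝ) < (ℓ:ℝ) + S i ω := by have := hSnonneg i ω; linarith
      have := exp_key a ((ℓ:ℝ) + S i ω) hdl.le hs
      have hrw : (ℓ:ℝ) + S i ω + a = (d:ℝ) + S i ω := by simp [hadef]; ring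
      rwa [hrw] at this
    -- sum bound
    have hsum : ∑ i ∈ Finset.range n, a / ((ℓ:ℝ) + S i ω) ≤ a * (N + 2*T/c) := by
      have hterm : ∀ i ∈ Finset.range n, a / ((ℓ:ℝ) + S i ω) ≤
          (if i < N then a else 0) + a * (2/c) * (1 / f i) := by
        intro i _
        have hs : (0:ℝ) < (ℓ:ℝ) + S i ω := by have := hSnonneg i ω; linarith
        by_cases hiN : i < N
        · simp only [hiN, if_true]
          have h1 : a / ((ℓ:ℝ) + S i ω) ≤ a := by
            apply div_le_self hdl.le
            have := hSnonneg i ω; linarith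
          have h2 : (0:ℝ) ≤ a * (2/c) * (1 / f i) :=
            mul_nonneg (mul_nonneg hdl.le (by positivity)) (one_div_nonneg.mpr (hf i).le)
          linarith
        · simp only [hiN, if_false]
          push_neg at hiN
          have hSi : c/2 * f i ≤ S i ω := hω i hiN
          have hcf : (0:ℝ) < c/2 * f i := mul_pos (by linarith) (hf i)
          have h1 : a / ((ℓ:ℝ) + S i ω) ≤ a / (c/2 * f i) := by
            apply div_le_div_of_nonneg_left hdl.le hcf
            linarith
          have h2 : a / (c/2 * f i) = a * (2/c) * (1/f i) := by
            rw [div_eq_mul_inv, mul_inv, mul_assoc]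
            congr 1
            · rw [div_eq_mul_inv, mul_inv, inv_inv, one_div]
              ring
          linarith [h1, h2.le, h2.ge]
      calc ∑ i ∈ Finset.range n, a / ((ℓ:ℝ) + S i ω)
          ≤ ∑ i ∈ Finset.range n, ((if i < N then a else 0) + a * (2/c) * (1 / f i)) :=
            Finset.sum_le_sum hterm
        _ = (∑ i ∈ Finset.range n, if i < N then a else 0)
            + a * (2/c) * ∑ i ∈ Finset.range n, (1 / f i) := by
            rw [Finset.sum_add_distrib, Finset.mul_sum]
        _ ≤ a * N + a * (2/c) * T := by
            gcongr
            · calc (∑ i ∈ Finset.range n, if i < N then a else 0)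
                  ≤ ∑ i ∈ Finset.range N, a := by
                    rw [← Finset.sum_filter]
                    apply Finset.sum_le_sum_of_subset_of_nonneg
                    · intro i hi
                      simp only [Finset.mem_filter, Finset.mem_range] at hi ⊢
                      exact hi.2
                    · intro i _ _; exact hdl.le
                _ = a * N := by simp [mul_comm]
            · exact Summable.sum_le_tsum _ (fun i _ => one_div_nonneg.mpr (hf i).le) hfsum
        _ = a * (N + 2*T/c) := by ring
    -- assemble
    have hprod : Real.exp (-(k:ℝ) * (∑ i ∈ Finset.range n, a / ((ℓ:ℝ) + S i ω))) ≤ g n ω := by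
      have e1 : ∏ i ∈ Finset.range n, (Real.exp (-(a / ((ℓ:ℝ) + S i ω)))) ^ k
          = Real.exp (∑ i ∈ Finset.range n, (k:ℝ) * -(a / ((ℓ:ℝ) + S i ω))) := by
        rw [Real.exp_sum]
        exact Finset.prod_congr rfl fun i _ => (Real.exp_nat_mul _ k).symm
      have e2 : -(k:ℝ) * (∑ i ∈ Finset.range n, a / ((ℓ:ℝ) + S i ω))
          = ∑ i ∈ Finset.range n, (k:ℝ) * -(a / ((ℓ:ℝ) + S i ω)) := by
        rw [Finset.mul_sum]
        exact Finset.sum_congr rfl fun i _ => by ring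
      rw [e2, ← e1]
      apply Finset.prod_le_prod
      · intro i _; positivity
      · intro i _
        exact pow_le_pow_left₀ (Real.exp_nonneg _) (hfac i) k
    refine le_trans ?_ hprod
    rw [hbdef]
    apply Real.exp_le_exp.mpr
    have hk0 : (0:ℝ) ≤ (k:ℝ) := Nat.cast_nonneg k
    nlinarith [hsum]
  -- integrability
  have hgmeas : ∀ n, Measurable (g n) := by
    intro n
    apply Finset.measurable_prod
    intro i _
    exact (measurable_const.sub
      (Measurable.div measurable_const (measurable_const.add (hSmeas i)))).pow_const k
  have hgint : ∀ n, Integrable (g n) P := by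
    intro n
    refine ⟨(hgmeas n).aestronglyMeasurable, ?_⟩
    apply HasFiniteIntegral.of_bounded (C := 1)
    filter_upwards with ω
    rw [Real.norm_eq_abs, abs_of_nonneg (hg01 n ω).1]
    exact (hg01 n ω).2
  -- lower bound for each integral
  have hint_lb : ∀ n, b * (1/2 : ℝ) ≤ ∫ ω, g n ω ∂P := by
    intro n
    have hind : (A N).indicator (fun _ => b) ≤ g n := by
      intro ω
      by_cases hω : ω ∈ A N
      · rw [Set.indicator_of_mem hω]; exact hptwise ω hω n
      · rw [Set.indicator_of_notMem hω]; exact (hg01 n ω).1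
    have hindint : Integrable ((A N).indicator (fun _ => b)) P :=
      (integrable_const b).indicator (hAmeas N)
    have h1 : ∫ ω, (A N).indicator (fun _ => b) ω ∂P ≤ ∫ ω, g n ω ∂P :=
      integral_mono hindint (hgint n) hind
    rw [integral_indicator_const b (hAmeas N)] at h1
    refine le_trans ?_ h1
    have hb0 : (0:ℝ) ≤ b := by rw [hbdef]; positivity
    have h2 : (1/2:ℝ) ≤ (P (A N)).toReal := by
      have := ENNReal.toReal_mono (measure_ne_top P (A N)) hN.le
      simpa using this
    calc b * (1/2) ≤ b * (P (A N)).toReal := mul_le_mul_of_nonneg_left h2 hb0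
      _ = (P (A N)).toReal • b := by rw [smul_eq_mul, mul_comm]
  -- antitone sequence of integrals
  set E : ℕ → ℝ := fun n => ∫ ω, g n ω ∂P with hEdef
  have hganti : ∀ ω, ∀ ⦃m n : ℕ⦄, m ≤ n → g n ω ≤ g m ω := by
    intro ω m n hmn
    rw [hgdef]
    simp only
    rw [← Finset.prod_range_mul_prod_Ico _ hmn]
    apply mul_le_of_le_one_right
    · exact Finset.prod_nonneg fun i _ => pow_nonneg (hfac01 i ω).1 k
    · exact Finset.prod_le_one (fun i _ => pow_nonneg (hfac01 i ω).1 k)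
        (fun i _ => pow_le_one₀ (hfac01 i ω).1 (hfac01 i ω).2)
  have hEanti : Antitone E := by
    intro m n hmn
    exact integral_mono (hgint n) (hgint m) (fun ω => hganti ω hmn)
  have hEbdd : BddBelow (Set.range E) := by
    refine ⟨0, ?_⟩
    rintro x ⟨n, rfl⟩
    exact integral_nonneg fun ω => (hg01 n ω).1
  refine ⟨⨅ n, E n, tendsto_atTop_ciInf hEanti hEbdd, ?_⟩
  refine le_ciInf fun n => le_trans ?_ (hint_lb n)
  -- exp(-C * a) ≤ b * (1/2)
  have hlog2 : Real.exp (-Real.log 2 * a) ≤ 1/2 := by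
    have h1 : -Real.log 2 * a ≤ -Real.log 2 := by
      have hl2 : (0:ℝ) < Real.log 2 := Real.log_pos (by norm_num)
      have ha1 : (1:ℝ) ≤ a := by
        rw [hadef]
        have : (ℓ:ℝ) + 1 ≤ (d:ℝ) := by exact_mod_cast hd
        linarith
      nlinarith
    calc Real.exp (-Real.log 2 * a) ≤ Real.exp (-Real.log 2) := Real.exp_le_exp.mpr h1
      _ = 1/2 := by rw [Real.exp_neg, Real.exp_log]; norm_num; norm_num
  calc Real.exp (-(k * N + 2 * k * T / c + Real.log 2) * ((d:ℝ) - ℓ))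
      = b * Real.exp (-Real.log 2 * a) := by
        rw [hbdef, ← Real.exp_add]
        congr 1
        field_simp
        ring
    _ ≤ b * (1/2) := mul_le_mul_of_nonneg_left hlog2 (Real.exp_nonneg _)
end

section
/- Let (ξ_j)_{j≥0} be i.i.d. nonnegative real-valued random variables with finite mean μ = E[ξ_0], and let S_0 = 0, S_n = ξ_0 + ... + ξ_{n-1}. If k is a positive integer with k < μ, then for every integer d ≥ 2, ∑_{n≥1} E[ ∏_{i=0}^{n-1} (1 - 1/(d + S_i))^k ] = ∞. -/
open MeasureTheory Filter Finset ProbabilityTheory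



lemma tbrw_aux_not_summable (d k : ℕ) (hd : 2 ≤ d) (hk : 1 ≤ k) (a C : ℝ)
    (hC : 0 ≤ C) (ha : (k : ℝ) < a) :
    ¬ Summable (fun n => ∏ i ∈ Finset.range n,
      (1 - 1 / ((d : ℝ) + max 0 (a * i - C))) ^ k) := by
  have hd2 : (2 : ℝ) ≤ d := by exact_mod_cast hd
  have hk1 : (1 : ℝ) ≤ k := by exact_mod_cast hk
  have ha0 : 0 < a := lt_of_lt_of_le (by linarith) (le_of_lt ha)
  set f : ℕ → ℝ := fun i => 1 - 1 / ((d : ℝ) + max 0 (a * i - C)) with hf_def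
  have hmax : ∀ i : ℕ, 0 ≤ max 0 (a * i - C) := fun i => le_max_left _ _
  have hD : ∀ i : ℕ, (2 : ℝ) ≤ (d : ℝ) + max 0 (a * i - C) := fun i => by
    have := hmax i; linarith
  have hfpos : ∀ i : ℕ, 0 < f i := by
    intro i
    have h2 := hD i
    have : 1 / ((d : ℝ) + max 0 (a * i - C)) ≤ 1 / 2 :=
      one_div_le_one_div_of_le (by norm_num) h2
    simp only [hf_def]; linarith
  set c : ℕ → ℝ := fun n => ∏ i ∈ Finset.range n, f i ^ k with hc_def
  have hcpos : ∀ n, 0 < c n := fun n =>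
    Finset.prod_pos fun i _ => pow_pos (hfpos i) k
  set r : ℝ := ((k : ℝ) / a + 1) / 2 with hr_def
  have hka : (k : ℝ) / a < 1 := (div_lt_one ha0).2 ha
  have hka0 : 0 < (k : ℝ) / a := div_pos (by linarith) ha0
  have hr1 : r < 1 := by rw [hr_def]; linarith
  have hr0 : 0 < r := by rw [hr_def]; linarith
  have hrak : (k : ℝ) < r * a := by
    have : (k : ℝ) / a < r := by rw [hr_def]; linarith
    calc (k : ℝ) = (k : ℝ) / a * a := by field_simp
    _ < r * a := by exact mul_lt_mul_of_pos_right this ha0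
  -- choose N
  obtain ⟨N, hN⟩ : ∃ N : ℕ, ∀ n : ℕ, N ≤ n →
      C ≤ a * n ∧ (k : ℝ) * (n + 2) ≤ r * ((d : ℝ) - 1 + (a * n - C)) := by
    obtain ⟨N, hN⟩ := exists_nat_ge (max (C / a) ((2 * k + r * C) / (r * a - k)))
    refine ⟨N, fun n hn => ?_⟩
    have hnN : (N : ℝ) ≤ n := by exact_mod_cast hn
    have h1 : C / a ≤ (n : ℝ) := le_trans (le_trans (le_max_left _ _) hN) hnN
    have h2 : (2 * k + r * C) / (r * a - k) ≤ (n : ℝ) :=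
      le_trans (le_trans (le_max_right _ _) hN) hnN
    have hCa : C ≤ a * n := by
      rw [div_le_iff₀ ha0] at h1; linarith
    refine ⟨hCa, ?_⟩
    have hpos : 0 < r * a - k := by linarith
    rw [div_le_iff₀ hpos] at h2
    have hd1 : 0 ≤ r * ((d : ℝ) - 1) := mul_nonneg hr0.le (by linarith)
    nlinarith
  -- key ratio inequality
  have key : ∀ n : ℕ, N ≤ n →
      ((n : ℝ) + 1) ^ r / ((n : ℝ) + 2) ^ r ≤ f n ^ k := by
    intro n hn
    obtain ⟨hCa, hineq⟩ := hN n hn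
    have hmaxn : max 0 (a * n - C) = a * n - C := max_eq_right (by linarith)
    set D : ℝ := (d : ℝ) + (a * n - C) with hD_def
    have hD2 : (2 : ℝ) ≤ D := by rw [hD_def]; linarith
    have hfn : f n = (D - 1) / D := by
      simp only [hf_def, hmaxn, hD_def]
      have hne : (d:ℝ) + (a * n - C) ≠ 0 := by linarith
      rw [sub_div, div_self hne]
    have hn1 : (0 : ℝ) < (n : ℝ) + 1 := by positivity
    have hn2 : (0 : ℝ) < (n : ℝ) + 2 := by positivity
    have hlhs : 0 < ((n : ℝ) + 1) ^ r / ((n : ℝ) + 2) ^ r := by positivity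
    have hrhs : 0 < f n ^ k := pow_pos (hfpos n) k
    rw [← Real.log_le_log_iff hlhs hrhs]
    have hlog1 : Real.log (((n : ℝ) + 1) ^ r / ((n : ℝ) + 2) ^ r)
        = r * Real.log ((n : ℝ) + 1) - r * Real.log ((n : ℝ) + 2) := by
      rw [Real.log_div (by positivity) (by positivity),
        Real.log_rpow hn1, Real.log_rpow hn2]
    have hlog2 : Real.log (f n ^ k) = (k : ℝ) * Real.log ((D - 1) / D) := by
      rw [hfn, Real.log_pow]
    rw [hlog1, hlog2]
    -- log((n+2)/(n+1)) ≥ 1/(n+2)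
    have hA : 1 / ((n : ℝ) + 2) ≤ Real.log ((n : ℝ) + 2) - Real.log ((n : ℝ) + 1) := by
      have h := Real.one_sub_inv_le_log_of_pos
        (show 0 < ((n : ℝ) + 2) / ((n : ℝ) + 1) by positivity)
      rw [Real.log_div (by positivity) (by positivity)] at h
      have : (1 : ℝ) - (((n : ℝ) + 2) / ((n : ℝ) + 1))⁻¹ = 1 / ((n : ℝ) + 2) := by
        rw [inv_div]; field_simp; norm_num
      linarith [this ▸ h]
    -- log(D/(D-1)) ≤ 1/(D-1)
    have hB : Real.log D - Real.log (D - 1) ≤ 1 / (D - 1) := by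
      have hD1 : (0:ℝ) < D - 1 := by linarith
      have h := Real.log_le_sub_one_of_pos (div_pos (by linarith : (0:ℝ) < D) hD1)
      rw [Real.log_div (by linarith) (ne_of_gt hD1)] at h
      have heq : D / (D - 1) - 1 = 1 / (D - 1) := by
        rw [div_sub_one (ne_of_gt hD1)]; ring_nf
      linarith [heq ▸ h]
    have hlogDD : Real.log ((D - 1) / D) = Real.log (D - 1) - Real.log D :=
      Real.log_div (by linarith) (by linarith)
    rw [hlogDD]
    -- suffices: r/(n+2) ≥ k/(D-1)
    have hcmp : (k : ℝ) / (D - 1) ≤ r / ((n : ℝ) + 2) := by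
      rw [div_le_div_iff₀ (by linarith) hn2]
      calc (k : ℝ) * ((n : ℝ) + 2) ≤ r * ((d : ℝ) - 1 + (a * n - C)) := hineq
      _ = r * (D - 1) := by rw [hD_def]; ring_nf
    have e1 : r * Real.log ((n : ℝ) + 1) - r * Real.log ((n : ℝ) + 2)
        ≤ -(r / ((n : ℝ) + 2)) := by
      have := mul_le_mul_of_nonneg_left hA hr0.le
      rw [mul_one_div] at this
      linarith [this]
    have e2 : -((k : ℝ) / (D - 1)) ≤ (k : ℝ) * (Real.log (D - 1) - Real.log D) := by
      have := mul_le_mul_of_nonneg_left hB (show (0:ℝ) ≤ k by positivity)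
      rw [mul_one_div] at this
      linarith [this]
    linarith
  -- monotonicity of c n * (n+1)^r
  have mono : ∀ n : ℕ, N ≤ n →
      c n * ((n : ℝ) + 1) ^ r ≤ c (n + 1) * ((n : ℝ) + 1 + 1) ^ r := by
    intro n hn
    have hsucc : c (n + 1) = c n * f n ^ k := Finset.prod_range_succ _ n
    have h2 : ((n : ℝ) + 1 + 1) = (n : ℝ) + 2 := by ring
    rw [hsucc, h2]
    have hkey := key n hn
    have hstep : ((n : ℝ) + 1) ^ r ≤ f n ^ k * ((n : ℝ) + 2) ^ r := by
      have h2pos : (0 : ℝ) < ((n : ℝ) + 2) ^ r := by positivity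
      have := mul_le_mul_of_nonneg_right hkey h2pos.le
      rwa [div_mul_cancel₀ _ h2pos.ne'] at this
    calc c n * ((n : ℝ) + 1) ^ r ≤ c n * (f n ^ k * ((n : ℝ) + 2) ^ r) :=
      mul_le_mul_of_nonneg_left hstep (hcpos n).le
    _ = c n * f n ^ k * ((n : ℝ) + 2) ^ r := by ring
  have lower : ∀ n : ℕ, N ≤ n →
      c N * ((N : ℝ) + 1) ^ r ≤ c n * ((n : ℝ) + 1) ^ r := by
    intro n hn
    induction n, hn using Nat.le_induction with
    | base => exact le_refl _
    | succ n hn ih =>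
      refine le_trans ih ?_
      have := mono n hn
      push_cast
      push_cast at this
      linarith
  set K : ℝ := c N * ((N : ℝ) + 1) ^ r with hK_def
  have hK : 0 < K := mul_pos (hcpos N) (by positivity)
  -- conclude
  intro hsum
  have hbound : ∀ n : ℕ, K * (((n : ℝ) + (N : ℝ) + 1 + 1) ^ r)⁻¹ ≤ c (n + (N + 1)) := by
    intro n
    have hle : N ≤ n + (N + 1) := by omega
    have h := lower (n + (N + 1)) hle
    have hcast : ((n + (N + 1) : ℕ) : ℝ) + 1 = (n : ℝ) + (N : ℝ) + 1 + 1 := by push_cast; ring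
    rw [hcast] at h
    have hpow : (0 : ℝ) < ((n : ℝ) + (N : ℝ) + 1 + 1) ^ r := by positivity
    rw [mul_inv_le_iff₀ hpow]  -- K * x⁻¹ ≤ c ↔ K ≤ c * x? check
    linarith
  have hsum2 : Summable (fun n => c (n + (N + 1))) := (summable_nat_add_iff (N + 1)).2 hsum
  have hsum3 : Summable (fun n : ℕ => K * (((n : ℝ) + (N : ℝ) + 1 + 1) ^ r)⁻¹) :=
    Summable.of_nonneg_of_le (fun n => by positivity) hbound hsum2
  have hsum4 : Summable (fun n : ℕ => (((n : ℝ) + (N : ℝ) + 1 + 1) ^ r)⁻¹) := by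
    have := hsum3.mul_left K⁻¹
    simpa [← mul_assoc, inv_mul_cancel₀ hK.ne'] using this
  have hsum5 : Summable (fun n : ℕ => (((n + (N + 2) : ℕ) : ℝ) ^ r)⁻¹) := by
    convert hsum4 using 2 with n
    push_cast; ring_nf
  have hsum6 : Summable (fun n : ℕ => ((n : ℝ) ^ r)⁻¹) :=
    (summable_nat_add_iff (N + 2)).1 hsum5
  rw [Real.summable_nat_rpow_inv] at hsum6
  linarith


/-- Theorem totti, item (i).
For an i.i.d. nonnegative environment with finite mean `μ` and a positive integer
`k < μ`, the series `∑_{n≥1} E[∏_{i=0}^{n-1} (1 - 1/(d + S_i))^k]` diverges for every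
integer `d ≥ 2` (so the expected exit time is infinite). -/
theorem tbrw_exit_time_infinite_of_lt_mean
    {Ω : Type*} [MeasurableSpace Ω] (P : Measure Ω) [IsProbabilityMeasure P]
    (ξ : ℕ → Ω → ℝ) (hmeas : ∀ j, Measurable (ξ j)) (hnonneg : ∀ j ω, 0 ≤ ξ j ω)
    (hindep : iIndepFun ξ P)
    (hident : ∀ j, IdentDistrib (ξ j) (ξ 0) P P)
    (hint : Integrable (ξ 0) P)
    (μ : ℝ) (hμ : μ = ∫ ω, ξ 0 ω ∂P)
    (k : ℕ) (hk : 1 ≤ k) (hkμ : (k : ℝ) < μ) :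
    ∀ d : ℕ, 2 ≤ d →
      ¬ Summable (fun n => ∫ ω, ∏ i ∈ Finset.range n,
        (1 - 1 / ((d : ℝ) + ∑ j ∈ Finset.range i, ξ j ω)) ^ k ∂P) := by
  intro d hd hsum
  have hd2 : (2 : ℝ) ≤ d := by exact_mod_cast hd
  have hk1 : (1 : ℝ) ≤ k := by exact_mod_cast hk
  set a : ℝ := ((k : ℝ) + μ) / 2 with ha_def
  have hka : (k : ℝ) < a := by rw [ha_def]; linarith
  have haμ : a < μ := by rw [ha_def]; linarith
  have ha0 : 0 < a := by linarith
  set S : ℕ → Ω → ℝ := fun i ω => ∑ j ∈ Finset.range i, ξ j ω with hS_def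
  have hSmeas : ∀ i, Measurable (S i) := fun i =>
    Finset.measurable_sum _ fun j _ => hmeas j
  have hSnonneg : ∀ i ω, 0 ≤ S i ω := fun i ω =>
    Finset.sum_nonneg fun j _ => hnonneg j ω
  -- SLLN
  have hpair : Pairwise (Function.onFun (fun f g => IndepFun f g P) ξ) := fun i j hij => hindep.indepFun hij
  have hslln := strong_law_ae_real ξ hint hpair hident
  have h1 : ∀ᵐ ω ∂P, ∃ Cn : ℕ, ∀ i : ℕ, a * i - Cn ≤ S i ω := by
    filter_upwards [hslln] with ω hω
    rw [← hμ] at hω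
    have hev : ∀ᶠ n : ℕ in atTop, a < (∑ i ∈ Finset.range n, ξ i ω) / n :=
      hω.eventually (eventually_gt_nhds haμ)
    obtain ⟨N, hN⟩ := hev.exists_forall_of_atTop
    refine ⟨⌈a * (N + 1)⌉₊, fun i => ?_⟩
    rcases le_or_gt (N + 1) i with hi | hi
    · have hi1 : 0 < (i : ℝ) := by
        have : 1 ≤ i := le_trans (Nat.le_add_left 1 N) hi
        exact_mod_cast this
      have := hN i (le_trans (Nat.le_succ N) hi)
      rw [lt_div_iff₀ hi1] at this
      have h0 : (0 : ℝ) ≤ ⌈a * ((N : ℝ) + 1)⌉₊ := Nat.cast_nonneg _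
      simp only [hS_def]
      linarith
    · have hcast : (i : ℝ) ≤ (N : ℝ) + 1 := by
        have : i ≤ N + 1 := le_of_lt hi
        exact_mod_cast this
      have h1 : a * i ≤ a * ((N : ℝ) + 1) := by
        exact mul_le_mul_of_nonneg_left hcast ha0.le
      have h2 : a * ((N : ℝ) + 1) ≤ ⌈a * ((N : ℝ) + 1)⌉₊ := Nat.le_ceil _
      have := hSnonneg i ω
      push_cast
      push_cast at h1 h2
      linarith
  -- the events B C
  set B : ℕ → Set Ω := fun C => ⋂ i : ℕ, {ω | a * i - C ≤ S i ω} with hB_def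
  have hBmeas : ∀ C, MeasurableSet (B C) := fun C =>
    MeasurableSet.iInter fun i => measurableSet_le measurable_const (hSmeas i)
  have h2 : ∀ᵐ ω ∂P, ω ∈ ⋃ C : ℕ, B C := by
    filter_upwards [h1] with ω hω
    obtain ⟨C, hC⟩ := hω
    exact Set.mem_iUnion.2 ⟨C, Set.mem_iInter.2 fun i => hC i⟩
  obtain ⟨C, hPC⟩ : ∃ C : ℕ, P (B C) ≠ 0 := by
    by_contra hcon
    push_neg at hcon
    have hz : P (⋃ C : ℕ, B C) = 0 := measure_iUnion_null hcon
    have hle : P Set.univ ≤ P (⋃ C : ℕ, B C) :=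
      measure_mono_ae (h2.mono fun ω h _ => h)
    rw [measure_univ, hz] at hle
    simp at hle
  set p : ℝ := (P (B C)).toReal with hp_def
  have hp : 0 < p := ENNReal.toReal_pos hPC (measure_ne_top P _)
  -- integrand functions
  set F : ℕ → Ω → ℝ := fun n ω => ∏ i ∈ Finset.range n,
    (1 - 1 / ((d : ℝ) + S i ω)) ^ k with hF_def
  have hfac : ∀ (i : ℕ) (ω : Ω), (1:ℝ)/2 ≤ 1 - 1 / ((d : ℝ) + S i ω) ∧
      1 - 1 / ((d : ℝ) + S i ω) ≤ 1 := by
    intro i ω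
    have h2 : (2 : ℝ) ≤ (d : ℝ) + S i ω := by have := hSnonneg i ω; linarith
    have hpos : (0 : ℝ) < (d : ℝ) + S i ω := by linarith
    constructor
    · have : 1 / ((d : ℝ) + S i ω) ≤ 1 / 2 := one_div_le_one_div_of_le (by norm_num) h2
      linarith
    · have : 0 ≤ 1 / ((d : ℝ) + S i ω) := by positivity
      linarith
  have hF01 : ∀ n ω, 0 ≤ F n ω ∧ F n ω ≤ 1 := by
    intro n ω
    constructor
    · exact Finset.prod_nonneg fun i _ => pow_nonneg (by linarith [(hfac i ω).1]) k
    · exact Finset.prod_le_one (fun i _ => pow_nonneg (by linarith [(hfac i ω).1]) k)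
        (fun i _ => pow_le_one₀ (by linarith [(hfac i ω).1]) (hfac i ω).2)
  have hFmeas : ∀ n, Measurable (F n) := by
    intro n
    apply Finset.measurable_prod
    intro i _
    exact ((measurable_const.div (measurable_const.add (hSmeas i))).const_sub 1).pow_const k
  have hFint : ∀ n, Integrable (F n) P := by
    intro n
    refine Integrable.mono' (integrable_const (1 : ℝ)) (hFmeas n).aestronglyMeasurable
      (ae_of_all _ fun ω => ?_)
    rw [Real.norm_eq_abs, abs_of_nonneg (hF01 n ω).1]
    exact (hF01 n ω).2
  -- lower bound by indicator
  set c : ℕ → ℝ := fun n => ∏ i ∈ Finset.range n,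
    (1 - 1 / ((d : ℝ) + max 0 (a * i - C))) ^ k with hc_def
  have hcnonneg : ∀ n, 0 ≤ c n := by
    intro n
    apply Finset.prod_nonneg
    intro i _
    apply pow_nonneg
    have hm : (0:ℝ) ≤ max 0 (a * i - C) := le_max_left _ _
    have h2 : (2 : ℝ) ≤ (d : ℝ) + max 0 (a * i - C) := by linarith
    have : 1 / ((d : ℝ) + max 0 (a * i - C)) ≤ 1 / 2 :=
      one_div_le_one_div_of_le (by norm_num) h2
    linarith
  have hlow : ∀ n, p * c n ≤ ∫ ω, F n ω ∂P := by
    intro n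
    have hind : ∫ ω, Set.indicator (B C) (fun _ => c n) ω ∂P = p * c n := by
      rw [integral_indicator_const (c n) (hBmeas C)]
      simp [hp_def, smul_eq_mul, Measure.real]
    rw [← hind]
    apply integral_mono ((integrable_const (c n)).indicator (hBmeas C)) (hFint n)
    intro ω
    by_cases hω : ω ∈ B C
    · rw [Set.indicator_of_mem hω]
      simp only [hF_def]
      apply Finset.prod_le_prod
      · intro i _
        apply pow_nonneg
        have hm : (0:ℝ) ≤ max 0 (a * i - C) := le_max_left _ _
        have h2 : (2 : ℝ) ≤ (d : ℝ) + max 0 (a * i - C) := by linarith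
        have : 1 / ((d : ℝ) + max 0 (a * i - C)) ≤ 1 / 2 :=
          one_div_le_one_div_of_le (by norm_num) h2
        linarith
      · intro i _
        apply pow_le_pow_left₀
        · have hm : (0:ℝ) ≤ max 0 (a * i - C) := le_max_left _ _
          have h2 : (2 : ℝ) ≤ (d : ℝ) + max 0 (a * i - C) := by linarith
          have : 1 / ((d : ℝ) + max 0 (a * i - C)) ≤ 1 / 2 :=
            one_div_le_one_div_of_le (by norm_num) h2
          linarith
        · have hSi : max 0 (a * i - C) ≤ S i ω := by
            have h1 := Set.mem_iInter.1 hω i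
            exact max_le (hSnonneg i ω) h1
          have hm : (0:ℝ) ≤ max 0 (a * i - C) := le_max_left _ _
          have hpos : (0 : ℝ) < (d : ℝ) + max 0 (a * i - C) := by linarith
          have : 1 / ((d : ℝ) + S i ω) ≤ 1 / ((d : ℝ) + max 0 (a * i - C)) :=
            one_div_le_one_div_of_le hpos (by linarith)
          linarith
    · rw [Set.indicator_of_notMem hω]
      exact (hF01 n ω).1
  -- conclude by comparison with the aux lemma
  have hsumc : Summable (fun n => p * c n) :=
    Summable.of_nonneg_of_le (fun n => mul_nonneg hp.le (hcnonneg n)) hlow hsum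
  have hsumc' : Summable c := by
    have := hsumc.mul_left p⁻¹
    simpa [← mul_assoc, inv_mul_cancel₀ hp.ne'] using this
  exact tbrw_aux_not_summable d k hd hk a C (Nat.cast_nonneg C) hka hsumc'
end

section
/- Let k be a positive integer and let (ξ_j)_{j≥0} be i.i.d. nonnegative real-valued random variables with mean E[ξ_0] = k, and let S_0 = 0, S_n = ξ_0 + ... + ξ_{n-1}. Assume there exists a constant c > 0 such that P( |S_n/n - k| > k/(2 log n) ) ≤ exp( -c n / (log n)^2 ) for every integer n ≥ 2. Then for every integer d ≥ 2, ∑_{n≥1} E[ ∏_{i=0}^{n-1} (1 - 1/(d + S_i))^k ] = ∞. -/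
open Filter Finset

namespace TBRWaux

lemma log_ge_one_sub_inv {t : ℝ} (ht : 0 < t) : 1 - 1/t ≤ Real.log t := by
  simpa [one_div] using Real.one_sub_inv_le_log_of_pos ht

/-- L1 -/
lemma exp_le_one_sub {x : ℝ} (h0 : 0 ≤ x) (h1 : x ≤ 1/2) :
    Real.exp (-x - 2*x^2) ≤ 1 - x := by
  have hpos : 0 < 1 - x := by linarith
  have h := log_ge_one_sub_inv hpos
  have h2 : -x - 2*x^2 ≤ 1 - 1/(1-x) := by
    have : 1/(1-x) ≤ 1 + x + 2*x^2 := by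
      rw [div_le_iff₀ hpos]; nlinarith
    linarith
  calc Real.exp (-x - 2*x^2) ≤ Real.exp (Real.log (1-x)) := by
        apply Real.exp_le_exp.2; linarith
    _ = 1 - x := Real.exp_log hpos

/-- L2 -/
lemma one_div_le_log_sub {r : ℝ} (hr : 2 ≤ r) : 1/r ≤ Real.log r - Real.log (r-1) := by
  have h1 : (0:ℝ) < r - 1 := by linarith
  have h0 : (0:ℝ) < r := by linarith
  have := log_ge_one_sub_inv (t := r/(r-1)) (by positivity)
  rw [Real.log_div (by positivity) (by positivity)] at this
  have : 1 - (r-1)/r ≤ Real.log r - Real.log (r-1) := by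
    have hne : r/(r-1) ≠ 0 := by positivity
    calc 1 - (r-1)/r = 1 - 1/(r/(r-1)) := by rw [one_div_div]
      _ ≤ _ := this
  have he : 1 - (r-1)/r = 1/r := by field_simp; ring
  linarith [he ▸ this]

/-- L3 lower -/
lemma one_div_mul_log_le {r : ℝ} (hr : 3 ≤ r) :
    1/(r * Real.log r) ≤ Real.log (Real.log r) - Real.log (Real.log (r-1)) := by
  have h2 : (2:ℝ) ≤ r - 1 := by linarith
  have hl1 : (0:ℝ) < Real.log (r-1) := Real.log_pos (by linarith)
  have hlr : 0 < Real.log r := Real.log_pos (by linarith)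
  have hmono : Real.log (r-1) ≤ Real.log r := Real.log_le_log (by linarith) (by linarith)
  have key := log_ge_one_sub_inv (t := Real.log r / Real.log (r-1)) (by positivity)
  rw [Real.log_div (ne_of_gt hlr) (ne_of_gt hl1)] at key
  have h1r : 1/r ≤ Real.log r - Real.log (r-1) := one_div_le_log_sub (by linarith)
  have e1 : 1 - 1/(Real.log r / Real.log (r-1)) = (Real.log r - Real.log (r-1))/Real.log r := by
    rw [one_div_div]; field_simp
  rw [e1] at key
  have : 1/(r * Real.log r) ≤ (Real.log r - Real.log (r-1))/Real.log r := by
    rw [div_le_div_iff₀ (by positivity) hlr]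
    have hr0 : (0:ℝ) < r := by linarith
    have h3 : (1/r) * (r * Real.log r) ≤ (Real.log r - Real.log (r-1)) * (r * Real.log r) :=
      mul_le_mul_of_nonneg_right h1r (by positivity)
    have h4 : (1/r) * (r * Real.log r) = Real.log r := by field_simp
    linarith
  linarith


/-- L3 upper -/
lemma log_log_succ_sub_le {r : ℝ} (hr : 3 ≤ r) :
    Real.log (Real.log (r+1)) - Real.log (Real.log r) ≤ 1/(r * Real.log r) := by
  have hlr : 0 < Real.log r := Real.log_pos (by linarith)
  have hlr1 : 0 < Real.log (r+1) := Real.log_pos (by linarith)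
  have hstep : Real.log (r+1) - Real.log r ≤ 1/r := by
    have := Real.log_le_sub_one_of_pos (x := (r+1)/r) (by positivity)
    rw [Real.log_div (by positivity) (by positivity)] at this
    have e : (r+1)/r - 1 = 1/r := by field_simp; ring
    linarith [e ▸ this]
  have key := Real.log_le_sub_one_of_pos (x := Real.log (r+1) / Real.log r) (by positivity)
  rw [Real.log_div (ne_of_gt hlr1) (ne_of_gt hlr)] at key
  have e1 : Real.log (r+1) / Real.log r - 1 = (Real.log (r+1) - Real.log r)/Real.log r := by
    field_simp
  rw [e1] at key
  have h2 : (Real.log (r+1) - Real.log r)/Real.log r ≤ (1/r)/Real.log r := by gcongr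
  rw [div_div] at h2
  linarith

/-- E1 -/
lemma sum_inv_le {N : ℕ} (hN : 3 ≤ N) :
    ∀ n, N ≤ n → ∑ i ∈ Ico N n, (1:ℝ)/i ≤ Real.log ((n:ℝ)-1) - Real.log ((N:ℝ)-1) := by
  refine Nat.le_induction (by simp) (fun n hn ih => ?_)
  have hn3 : (3:ℝ) ≤ (n:ℝ) := by exact_mod_cast hN.trans hn
  rw [Finset.sum_Ico_succ_top hn]
  have h := one_div_le_log_sub (r := (n:ℝ)) (by linarith)
  push_cast
  have e : (n:ℝ) + 1 - 1 = n := by ring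
  rw [e]
  linarith

/-- E2 -/
lemma sum_inv_log_le {N : ℕ} (hN : 3 ≤ N) :
    ∀ n, N ≤ n → ∑ i ∈ Ico N n, 1/((i:ℝ) * Real.log i) ≤
      Real.log (Real.log ((n:ℝ)-1)) - Real.log (Real.log ((N:ℝ)-1)) := by
  refine Nat.le_induction (by simp) (fun n hn ih => ?_)
  have hn3 : (3:ℝ) ≤ (n:ℝ) := by exact_mod_cast hN.trans hn
  rw [Finset.sum_Ico_succ_top hn]
  have h := one_div_mul_log_le (r := (n:ℝ)) hn3
  push_cast
  have e : (n:ℝ) + 1 - 1 = n := by ring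
  rw [e]
  linarith

/-- E3 -/
lemma sum_inv_sq_le {N : ℕ} (hN : 3 ≤ N) :
    ∀ n, N ≤ n → ∑ i ∈ Ico N n, 1/((i:ℝ))^2 ≤ 1 := by
  have key : ∀ n, N ≤ n → ∑ i ∈ Ico N n, 1/((i:ℝ))^2 ≤ 1/((N:ℝ)-1) - 1/((n:ℝ)-1) := by
    refine Nat.le_induction (by simp) (fun n hn ih => ?_)
    have hn3 : (3:ℝ) ≤ (n:ℝ) := by exact_mod_cast hN.trans hn
    rw [Finset.sum_Ico_succ_top hn]
    have h : 1/((n:ℝ))^2 ≤ 1/((n:ℝ)-1) - 1/(n:ℝ) := by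
      rw [div_sub_div _ _ (by linarith) (by linarith), div_le_div_iff₀ (by positivity) (by nlinarith)]
      ring_nf; nlinarith
    push_cast
    have e : (n:ℝ) + 1 - 1 = n := by ring
    rw [e]
    linarith
  intro n hn
  have hN3 : (3:ℝ) ≤ (N:ℝ) := by exact_mod_cast hN
  have hn3 : (3:ℝ) ≤ (n:ℝ) := by exact_mod_cast hN.trans hn
  have h1 : (0:ℝ) ≤ 1/((n:ℝ)-1) := div_nonneg zero_le_one (by linarith)
  have h2 : 1/((N:ℝ)-1) ≤ 1 := by
    rw [div_le_one (by linarith)]; linarith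
  linarith [key n hn]

/-- E4: divergence lower bound -/
lemma log_log_le_sum :
    ∀ n : ℕ, 3 ≤ n → Real.log (Real.log (n:ℝ)) - Real.log (Real.log 3) ≤
      ∑ i ∈ Ico 3 n, 1/((i:ℝ) * Real.log i) := by
  refine Nat.le_induction (by norm_num) (fun n hn ih => ?_)
  have hn3 : (3:ℝ) ≤ (n:ℝ) := by exact_mod_cast hn
  rw [Finset.sum_Ico_succ_top hn]
  have h := log_log_succ_sub_le (r := (n:ℝ)) hn3
  push_cast
  linarith

/-- F -/
lemma not_summable_inv_mul_log :
    ¬ Summable (fun n : ℕ => 1/((n:ℝ) * Real.log n)) := by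
  intro hs
  have hnonneg : ∀ i : ℕ, 0 ≤ 1/((i:ℝ) * Real.log i) := by
    intro i
    have : (0:ℝ) ≤ Real.log i := by
      rcases Nat.eq_zero_or_pos i with h | h
      · simp [h]
      · exact Real.log_nonneg (by exact_mod_cast h)
    exact div_nonneg one_pos.le (mul_nonneg (Nat.cast_nonneg i) this)
  have hbd : ∀ n : ℕ, 3 ≤ n → Real.log (Real.log (n:ℝ)) - Real.log (Real.log 3) ≤
      ∑' i : ℕ, 1/((i:ℝ) * Real.log i) := fun n hn =>
    (log_log_le_sum n hn).trans (Summable.sum_le_tsum _ (fun i _ => hnonneg i) hs)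
  have htend : Tendsto (fun n : ℕ => Real.log (Real.log (n:ℝ))) atTop atTop :=
    (Real.tendsto_log_atTop.comp Real.tendsto_log_atTop).comp tendsto_natCast_atTop_atTop
  obtain ⟨n, hgt, hn3⟩ := ((htend.eventually_gt_atTop
      (∑' i : ℕ, 1/((i:ℝ) * Real.log i) + Real.log (Real.log 3))).and
      (eventually_ge_atTop 3)).exists
  linarith [hbd n hn3]


/-- fraction bound -/
lemma frac_bound {r kk L D : ℝ} (hr : 4 ≤ r) (hk : 1 ≤ kk) (hL : 1 ≤ L)
    (hD : r*kk*(1 - 1/(2*L)) ≤ D) :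
    kk * (1/D) ≤ 1/r + 1/(r*L) ∧ 1/D ≤ 2/r := by
  have hL0 : (0:ℝ) < L := by linarith
  have hr0 : (0:ℝ) < r := by linarith
  have hu : 1/(2*L) ≤ 1/2 := by
    apply one_div_le_one_div_of_le (by norm_num) (by linarith)
  have hu0 : 0 < 1/(2*L) := by positivity
  have hden0 : 0 < r*kk*(1-1/(2*L)) :=
    mul_pos (mul_pos hr0 (by linarith)) (by linarith)
  have hD0 : 0 < D := lt_of_lt_of_le hden0 hD
  constructor
  · rw [mul_one_div]
    have h2 : kk/D ≤ kk/(r*kk*(1-1/(2*L))) := by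
      gcongr
    refine h2.trans ?_
    rw [div_le_iff₀ hden0]
    have ha0 : 0 < 1/L := by positivity
    have ha1 : 1/L ≤ 1 := by rw [div_le_one hL0]; exact hL
    have e : (1/r + 1/(r*L)) * (r*kk*(1-1/(2*L))) = kk*(1 + (1/L)/2 - (1/L)^2/2) := by
      field_simp
      ring
    rw [e]
    nlinarith [mul_nonneg (mul_nonneg (by linarith : (0:ℝ) ≤ kk) ha0.le)
      (by linarith : (0:ℝ) ≤ 1 - 1/L)]
  · rw [div_le_div_iff₀ hD0 hr0]
    have hka : (1:ℝ)/2 ≤ kk*(1-1/(2*L)) := by nlinarith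
    have h5 : r*(1/2) ≤ r*(kk*(1-1/(2*L))) := mul_le_mul_of_nonneg_left hka hr0.le
    nlinarith [h5, hD]


/-- choice of N with small tail -/
lemma exists_tail_small (c : ℝ) (hc : 0 < c) :
    ∃ N : ℕ, 4 ≤ N ∧ ∀ n : ℕ,
      ∑ i ∈ Ico N n, Real.exp (-c * i / (Real.log i)^2) ≤ 1/2 := by
  set g : ℕ → ℝ := fun i => Real.exp (-c * i / (Real.log i)^2) with hgdef
  have hg0 : ∀ i, 0 ≤ g i := fun i => (Real.exp_pos _).le
  have hev : ∀ᶠ x : ℝ in atTop, ‖Real.log x ^ 3‖ ≤ c/2 * ‖x‖ :=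
    (Real.isLittleO_pow_log_id_atTop (n := 3)).def (by positivity)
  have hevn : ∀ᶠ i : ℕ in atTop, g i ≤ 1/(i:ℝ)^2 := by
    filter_upwards [tendsto_natCast_atTop_atTop.eventually hev, eventually_ge_atTop 3]
      with i h1 h3
    have hi : (3:ℝ) ≤ (i:ℝ) := by exact_mod_cast h3
    have hL : 0 < Real.log i := Real.log_pos (by linarith)
    have h4 : 2 * Real.log i ^ 3 ≤ c * i := by
      rw [Real.norm_eq_abs, Real.norm_eq_abs, abs_of_nonneg (by positivity),
        abs_of_nonneg (by linarith)] at h1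
      linarith
    have h5 : -c * i / Real.log i ^ 2 ≤ -(2 * Real.log i) := by
      rw [div_le_iff₀ (by positivity)]
      nlinarith
    calc g i ≤ Real.exp (-(2 * Real.log i)) := Real.exp_le_exp.2 h5
      _ = 1/(i:ℝ)^2 := by
          have e : ((i:ℝ)^2) = Real.exp (2*Real.log i) := by
            rw [← Real.exp_log (show (0:ℝ) < (i:ℝ)^2 by positivity), Real.log_pow]
            norm_num
          rw [Real.exp_neg, e, one_div]
  have hsum : Summable g := by
    have hb : Summable (fun i : ℕ => 1/(i:ℝ)^2) :=
      Real.summable_one_div_nat_pow.2 (by norm_num)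
    apply summable_of_isBigO_nat hb
    apply Asymptotics.IsBigO.of_bound 1
    filter_upwards [hevn] with i h
    rw [one_mul, Real.norm_eq_abs, Real.norm_eq_abs, abs_of_nonneg (hg0 i)]
    exact h.trans (le_abs_self _)
  have htail : Tendsto (fun N => ∑' k, g (k + N)) atTop (nhds 0) := tendsto_sum_nat_add g
  obtain ⟨N, hN1, hN4⟩ := ((htail.eventually_le_const (show (0:ℝ) < 1/2 by norm_num)).and
      (eventually_ge_atTop 4)).exists
  refine ⟨N, hN4, fun n => ?_⟩
  have hsum' : Summable (fun i => g (i + N)) := (summable_nat_add_iff N).2 hsum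
  calc ∑ i ∈ Ico N n, g i = ∑ i ∈ range (n - N), g (N + i) :=
        Finset.sum_Ico_eq_sum_range _ _ _
    _ = ∑ i ∈ range (n - N), g (i + N) := by
        refine Finset.sum_congr rfl fun i _ => by rw [add_comm]
    _ ≤ ∑' i, g (i + N) := Summable.sum_le_tsum _ (fun i _ => hg0 _) hsum'
    _ ≤ 1/2 := hN1

end TBRWaux


open MeasureTheory Filter Finset ProbabilityTheory

namespace TBRWaux

variable {Ω : Type*}

noncomputable def Spart (ξ : ℕ → Ω → ℝ) (i : ℕ) (ω : Ω) : ℝ := ∑ j ∈ Finset.range i, ξ j ω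

noncomputable def Fprod (d k : ℕ) (ξ : ℕ → Ω → ℝ) (n : ℕ) (ω : Ω) : ℝ :=
  ∏ i ∈ Finset.range n, (1 - 1 / ((d : ℝ) + Spart ξ i ω)) ^ k

end TBRWaux

/-- Theorem totti, item (i*), critical case `k = μ`.
For an i.i.d. nonnegative environment with mean exactly `k`, if the partial sums
satisfy the moderate deviation bound
`P(|S_n/n - k| > k/(2 log n)) ≤ exp(-c n / (log n)²)` for all `n ≥ 2`,
then the series `∑_{n≥1} E[∏_{i=0}^{n-1} (1 - 1/(d + S_i))^k]` diverges for every
integer `d ≥ 2`. -/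
theorem tbrw_exit_time_infinite_critical
    {Ω : Type*} [MeasurableSpace Ω] (P : Measure Ω) [IsProbabilityMeasure P]
    (k : ℕ) (hk : 1 ≤ k)
    (ξ : ℕ → Ω → ℝ) (hmeas : ∀ j, Measurable (ξ j)) (hnonneg : ∀ j ω, 0 ≤ ξ j ω)
    (hindep : iIndepFun ξ P)
    (hident : ∀ j, IdentDistrib (ξ j) (ξ 0) P P)
    (hint : Integrable (ξ 0) P)
    (hmean : ∫ ω, ξ 0 ω ∂P = (k : ℝ))
    (c : ℝ) (hc : 0 < c)
    (hMD : ∀ n : ℕ, 2 ≤ n →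
      P {ω | (k : ℝ) / (2 * Real.log n) <
          |(∑ j ∈ Finset.range n, ξ j ω) / (n : ℝ) - (k : ℝ)|}
        ≤ ENNReal.ofReal (Real.exp (-c * (n : ℝ) / (Real.log n) ^ 2))) :
    ∀ d : ℕ, 2 ≤ d →
      ¬ Summable (fun n => ∫ ω, ∏ i ∈ Finset.range n,
        (1 - 1 / ((d : ℝ) + ∑ j ∈ Finset.range i, ξ j ω)) ^ k ∂P) := by
  intro d hd hsum
  classical
  have hsumF : Summable (fun n => ∫ ω, TBRWaux.Fprod d k ξ n ω ∂P) := by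
    simpa only [TBRWaux.Fprod, TBRWaux.Spart] using hsum
  clear hsum
  set S := TBRWaux.Spart ξ with hSdef
  set F := TBRWaux.Fprod d k ξ with hFdef
  -- basic facts
  have hSmeas : ∀ i, Measurable (S i) := fun i =>
    Finset.measurable_sum _ (fun j _ => hmeas j)
  have hSnn : ∀ i ω, 0 ≤ S i ω := fun i ω => Finset.sum_nonneg fun j _ => hnonneg j ω
  have hd2 : (2:ℝ) ≤ (d:ℝ) := by exact_mod_cast hd
  have hk1 : (1:ℝ) ≤ (k:ℝ) := by exact_mod_cast hk
  have hden2 : ∀ i ω, (2:ℝ) ≤ (d:ℝ) + S i ω := fun i ω => by linarith [hSnn i ω]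
  have hx12 : ∀ i ω, 0 < 1/((d:ℝ) + S i ω) ∧ 1/((d:ℝ) + S i ω) ≤ 1/2 := fun i ω =>
    ⟨one_div_pos.2 (by linarith [hden2 i ω]),
     one_div_le_one_div_of_le (by norm_num) (hden2 i ω)⟩
  have hfac : ∀ i ω, 1/2 ≤ 1 - 1/((d:ℝ) + S i ω) ∧ 1 - 1/((d:ℝ)+S i ω) ≤ 1 := fun i ω =>
    ⟨by linarith [(hx12 i ω).2], by linarith [(hx12 i ω).1]⟩
  have hFeq : ∀ n ω, F n ω = ∏ i ∈ Finset.range n, (1 - 1/((d:ℝ) + S i ω))^k :=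
    fun n ω => rfl
  have hF0 : ∀ n ω, 0 ≤ F n ω := fun n ω => by
    rw [hFeq]
    exact Finset.prod_nonneg fun i _ => pow_nonneg (by linarith [(hfac i ω).1]) k
  have hF1 : ∀ n ω, F n ω ≤ 1 := fun n ω => by
    rw [hFeq]
    exact Finset.prod_le_one
      (fun i _ => pow_nonneg (by linarith [(hfac i ω).1]) k)
      (fun i _ => pow_le_one₀ (by linarith [(hfac i ω).1]) (by linarith [(hfac i ω).2]))
  have hFmeas : ∀ n, Measurable (F n) := fun n => by
    rw [show F n = fun ω => ∏ i ∈ Finset.range n, (1 - 1/((d:ℝ) + S i ω))^k from rfl]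
    exact Finset.measurable_prod _ fun i _ =>
      (measurable_const.sub ((measurable_const.add (hSmeas i)).const_div 1)).pow_const k
  have hFint : ∀ n, Integrable (F n) P := fun n =>
    (integrable_const (1:ℝ)).mono' (hFmeas n).aestronglyMeasurable
      (Filter.Eventually.of_forall fun ω => by
        rw [Real.norm_eq_abs, abs_of_nonneg (hF0 n ω)]
        simpa using hF1 n ω)
  -- choice of N
  obtain ⟨N, hN4, hNtail⟩ := TBRWaux.exists_tail_small c hc
  have hN4R : (4:ℝ) ≤ (N:ℝ) := by exact_mod_cast hN4
  -- events
  set A : ℕ → Set Ω := fun i => {ω | |S i ω / (i:ℝ) - (k:ℝ)| ≤ (k:ℝ)/(2*Real.log i)}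
    with hAdef
  have hAmeas : ∀ i, MeasurableSet (A i) := fun i =>
    measurableSet_le (Measurable.abs (((hSmeas i).div_const _).sub_const _)) measurable_const
  have hAc : ∀ i, 2 ≤ i →
      P (A i)ᶜ ≤ ENNReal.ofReal (Real.exp (-c * i / (Real.log i)^2)) := by
    intro i hi
    have he : (A i)ᶜ = {ω | (k:ℝ)/(2*Real.log i) < |S i ω / (i:ℝ) - (k:ℝ)|} := by
      ext ω; simp [hAdef, not_le]
    rw [he]
    exact hMD i hi
  set G : ℕ → Set Ω := fun n => ⋂ i ∈ Finset.Ico N n, A i with hGdef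
  have hGmeas : ∀ n, MeasurableSet (G n) := fun n =>
    MeasurableSet.iInter fun i => MeasurableSet.iInter fun _ => hAmeas i
  have hGc : ∀ n, P (G n)ᶜ ≤ ENNReal.ofReal (1/2) := by
    intro n
    have he : (G n)ᶜ = ⋃ i ∈ Finset.Ico N n, (A i)ᶜ := by
      simp [hGdef, Set.compl_iInter]
    rw [he]
    calc P (⋃ i ∈ Finset.Ico N n, (A i)ᶜ) ≤ ∑ i ∈ Finset.Ico N n, P (A i)ᶜ :=
          measure_biUnion_finset_le _ _
      _ ≤ ∑ i ∈ Finset.Ico N n, ENNReal.ofReal (Real.exp (-c * i / (Real.log i)^2)) :=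
          Finset.sum_le_sum fun i hi => hAc i (by
            have := (Finset.mem_Ico.1 hi).1; omega)
      _ = ENNReal.ofReal (∑ i ∈ Finset.Ico N n, Real.exp (-c * i / (Real.log i)^2)) :=
          (ENNReal.ofReal_sum_of_nonneg fun i _ => (Real.exp_pos _).le).symm
      _ ≤ ENNReal.ofReal (1/2) := ENNReal.ofReal_le_ofReal (hNtail n)
  have hGhalf : ∀ n, (1:ℝ)/2 ≤ (P (G n)).toReal := by
    intro n
    have h1 : (P (G n)ᶜ).toReal ≤ 1/2 := by
      have h := ENNReal.toReal_mono (by simp) (hGc n)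
      rwa [ENNReal.toReal_ofReal (by norm_num)] at h
    have h2 : (P (G n)).toReal + (P (G n)ᶜ).toReal = 1 := by
      rw [← ENNReal.toReal_add (measure_ne_top P _) (measure_ne_top P _),
        measure_add_measure_compl (hGmeas n), measure_univ, ENNReal.toReal_one]
    linarith
  -- constants
  have hlogN : (0:ℝ) < Real.log ((N:ℝ)-1) := Real.log_pos (by linarith)
  set C0 : ℝ := 8*(k:ℝ) - Real.log ((N:ℝ)-1) - Real.log (Real.log ((N:ℝ)-1)) with hC0
  set A0 : ℝ := ((1:ℝ)/2)^(k*N) * Real.exp (-C0) with hA0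
  have hA0pos : 0 < A0 := by rw [hA0]; positivity
  -- key pointwise bound
  have hkey : ∀ n, N ≤ n → ∀ ω ∈ G n, A0 / ((n:ℝ) * Real.log n) ≤ F n ω := by
    intro n hn ω hω
    have hmem : ∀ i, N ≤ i → i < n →
        |S i ω / (i:ℝ) - (k:ℝ)| ≤ (k:ℝ)/(2*Real.log i) := by
      intro i h1 h2
      have := Set.mem_iInter₂.1 hω i (Finset.mem_Ico.2 ⟨h1, h2⟩)
      exact this
    have hnR : (4:ℝ) ≤ (n:ℝ) := by
      have : (N:ℝ) ≤ (n:ℝ) := by exact_mod_cast hn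
      linarith
    have hnpos : (0:ℝ) < (n:ℝ) := by linarith
    have hlogn : (0:ℝ) < Real.log n := Real.log_pos (by linarith)
    have hlogn1 : (0:ℝ) < Real.log ((n:ℝ)-1) := Real.log_pos (by linarith)
    -- per-i inequality on the good event
    have hfacts : ∀ i ∈ Finset.Ico N n,
        (k:ℝ) * (1/((d:ℝ)+S i ω)) + 2*(k:ℝ)*(1/((d:ℝ)+S i ω))^2
          ≤ 1/(i:ℝ) + 1/((i:ℝ)*Real.log i) + 8*(k:ℝ)*(1/(i:ℝ)^2) := by
      intro i hi
      obtain ⟨h1, h2⟩ := Finset.mem_Ico.1 hi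
      have hi4 : 4 ≤ i := le_trans hN4 h1
      have hiR : (4:ℝ) ≤ (i:ℝ) := by exact_mod_cast hi4
      have hi0 : (0:ℝ) < (i:ℝ) := by linarith
      have hL1 : 1 ≤ Real.log i := by
        calc (1:ℝ) ≤ Real.log 4 := by
              rw [Real.le_log_iff_exp_le (by norm_num)]
              exact (Real.exp_one_lt_d9.le.trans (by norm_num))
          _ ≤ Real.log i := Real.log_le_log (by norm_num) hiR
      have habs := hmem i h1 h2
      have hS_lb : (i:ℝ)*(k:ℝ)*(1 - 1/(2*Real.log i)) ≤ (d:ℝ) + S i ω := by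
        have h3 := (abs_le.1 habs).1
        have h4 : (k:ℝ) - (k:ℝ)/(2*Real.log i) ≤ S i ω / i := by linarith
        have h5 := mul_le_mul_of_nonneg_left h4 hi0.le
        rw [mul_div_cancel₀ (S i ω) (ne_of_gt hi0)] at h5
        have h6 : (i:ℝ)*(k:ℝ)*(1 - 1/(2*Real.log i)) =
            (i:ℝ) * ((k:ℝ) - (k:ℝ)/(2*Real.log i)) := by ring
        have hd0 : (0:ℝ) ≤ (d:ℝ) := by linarith
        linarith [h6 ▸ h5]
      obtain ⟨b1, b2⟩ := TBRWaux.frac_bound hiR hk1 hL1 hS_lb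
      have hb2sq : (1/((d:ℝ)+S i ω))^2 ≤ (2/(i:ℝ))^2 :=
        pow_le_pow_left₀ (le_of_lt (hx12 i ω).1) b2 2
      have he4 : (2/(i:ℝ))^2 = 4*(1/(i:ℝ)^2) := by
        field_simp
        norm_num
      have hmul := mul_le_mul_of_nonneg_left hb2sq
        (by positivity : (0:ℝ) ≤ 2*(k:ℝ))
      rw [he4] at hmul
      have : 2*(k:ℝ)*(4*(1/(i:ℝ)^2)) = 8*(k:ℝ)*(1/(i:ℝ)^2) := by ring
      linarith [b1, this ▸ hmul]
    -- sum bound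
    have hsum_bound : ∑ i ∈ Finset.Ico N n,
        ((k:ℝ)*(1/((d:ℝ)+S i ω)) + 2*(k:ℝ)*(1/((d:ℝ)+S i ω))^2)
          ≤ Real.log n + Real.log (Real.log n) + C0 := by
      have e1 := TBRWaux.sum_inv_le (by omega : 3 ≤ N) n hn
      have e2 := TBRWaux.sum_inv_log_le (by omega : 3 ≤ N) n hn
      have e3 := TBRWaux.sum_inv_sq_le (by omega : 3 ≤ N) n hn
      have hmono1 : Real.log ((n:ℝ)-1) ≤ Real.log n :=
        Real.log_le_log (by linarith) (by linarith)
      have hmono2 : Real.log (Real.log ((n:ℝ)-1)) ≤ Real.log (Real.log n) :=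
        Real.log_le_log hlogn1 hmono1
      calc ∑ i ∈ Finset.Ico N n,
          ((k:ℝ)*(1/((d:ℝ)+S i ω)) + 2*(k:ℝ)*(1/((d:ℝ)+S i ω))^2)
          ≤ ∑ i ∈ Finset.Ico N n,
            (1/(i:ℝ) + 1/((i:ℝ)*Real.log i) + 8*(k:ℝ)*(1/(i:ℝ)^2)) :=
            Finset.sum_le_sum hfacts
        _ = (∑ i ∈ Finset.Ico N n, 1/(i:ℝ)) +
            (∑ i ∈ Finset.Ico N n, 1/((i:ℝ)*Real.log i)) +
            8*(k:ℝ) * (∑ i ∈ Finset.Ico N n, 1/(i:ℝ)^2) := by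
            rw [Finset.sum_add_distrib, Finset.sum_add_distrib, Finset.mul_sum]
        _ ≤ (Real.log ((n:ℝ)-1) - Real.log ((N:ℝ)-1)) +
            (Real.log (Real.log ((n:ℝ)-1)) - Real.log (Real.log ((N:ℝ)-1))) +
            8*(k:ℝ) * 1 :=
            add_le_add (add_le_add e1 e2) (mul_le_mul_of_nonneg_left e3 (by positivity))
        _ ≤ Real.log n + Real.log (Real.log n) + C0 := by
            rw [hC0]; linarith
    -- product over Ico
    have hIco : Real.exp (-(Real.log n + Real.log (Real.log n) + C0))
        ≤ ∏ i ∈ Finset.Ico N n, (1 - 1/((d:ℝ)+S i ω))^k := by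
      have step1 : ∀ i ∈ Finset.Ico N n,
          Real.exp (-((k:ℝ)*(1/((d:ℝ)+S i ω)) + 2*(k:ℝ)*(1/((d:ℝ)+S i ω))^2))
            ≤ (1 - 1/((d:ℝ)+S i ω))^k := by
        intro i _
        have hx := hx12 i ω
        have l1 : Real.exp (-(1/((d:ℝ)+S i ω)) - 2*(1/((d:ℝ)+S i ω))^2)
            ≤ 1 - 1/((d:ℝ)+S i ω) := TBRWaux.exp_le_one_sub hx.1.le hx.2
        calc Real.exp (-((k:ℝ)*(1/((d:ℝ)+S i ω)) + 2*(k:ℝ)*(1/((d:ℝ)+S i ω))^2))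
            = Real.exp (-(1/((d:ℝ)+S i ω)) - 2*(1/((d:ℝ)+S i ω))^2) ^ k := by
              rw [← Real.exp_nat_mul]; congr 1; ring
          _ ≤ (1 - 1/((d:ℝ)+S i ω))^k := pow_le_pow_left₀ (Real.exp_pos _).le l1 k
      calc Real.exp (-(Real.log n + Real.log (Real.log n) + C0))
          ≤ Real.exp (-(∑ i ∈ Finset.Ico N n,
              ((k:ℝ)*(1/((d:ℝ)+S i ω)) + 2*(k:ℝ)*(1/((d:ℝ)+S i ω))^2))) :=
            Real.exp_le_exp.2 (by linarith [hsum_bound])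
        _ = ∏ i ∈ Finset.Ico N n,
            Real.exp (-((k:ℝ)*(1/((d:ℝ)+S i ω)) + 2*(k:ℝ)*(1/((d:ℝ)+S i ω))^2)) := by
            rw [← Real.exp_sum, Finset.sum_neg_distrib]
        _ ≤ ∏ i ∈ Finset.Ico N n, (1 - 1/((d:ℝ)+S i ω))^k :=
            Finset.prod_le_prod (fun i _ => (Real.exp_pos _).le) step1
    -- product over range N
    have hHead : ((1:ℝ)/2)^(k*N) ≤ ∏ i ∈ Finset.range N, (1 - 1/((d:ℝ)+S i ω))^k := by
      calc ((1:ℝ)/2)^(k*N) = (((1:ℝ)/2)^k)^N := by rw [pow_mul]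
        _ = ∏ _i ∈ Finset.range N, ((1:ℝ)/2)^k := by
            rw [Finset.prod_const, Finset.card_range]
        _ ≤ ∏ i ∈ Finset.range N, (1 - 1/((d:ℝ)+S i ω))^k :=
            Finset.prod_le_prod (fun i _ => by positivity)
              (fun i _ => pow_le_pow_left₀ (by norm_num) (hfac i ω).1 k)
    have hsplit : F n ω = (∏ i ∈ Finset.range N, (1 - 1/((d:ℝ)+S i ω))^k) *
        ∏ i ∈ Finset.Ico N n, (1 - 1/((d:ℝ)+S i ω))^k := by
      rw [hFeq, Finset.prod_range_mul_prod_Ico _ hn]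
    have hexp_eq : Real.exp (-(Real.log n + Real.log (Real.log n) + C0))
        = Real.exp (-C0) / ((n:ℝ)*Real.log n) := by
      rw [show -(Real.log n + Real.log (Real.log n) + C0)
          = (-C0) + (-Real.log n) + (-Real.log (Real.log n)) by ring,
        Real.exp_add, Real.exp_add, Real.exp_neg (Real.log n),
        Real.exp_neg (Real.log (Real.log n)), Real.exp_log hnpos, Real.exp_log hlogn]
      field_simp
    rw [hsplit]
    calc A0 / ((n:ℝ)*Real.log n)
        = ((1:ℝ)/2)^(k*N) * (Real.exp (-C0) / ((n:ℝ)*Real.log n)) := by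
          rw [hA0]; ring
      _ = ((1:ℝ)/2)^(k*N) * Real.exp (-(Real.log n + Real.log (Real.log n) + C0)) := by
          rw [hexp_eq]
      _ ≤ (∏ i ∈ Finset.range N, (1 - 1/((d:ℝ)+S i ω))^k) *
          ∏ i ∈ Finset.Ico N n, (1 - 1/((d:ℝ)+S i ω))^k :=
          mul_le_mul hHead hIco (Real.exp_pos _).le
            (Finset.prod_nonneg fun i _ => pow_nonneg (by linarith [(hfac i ω).1]) k)
  -- integral bound
  have hInt : ∀ n, N ≤ n → A0/((n:ℝ)*Real.log n) * (1/2) ≤ ∫ ω, F n ω ∂P := by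
    intro n hn
    have hnR : (4:ℝ) ≤ (n:ℝ) := by
      have : (N:ℝ) ≤ (n:ℝ) := by exact_mod_cast hn
      linarith
    have hnpos : (0:ℝ) < (n:ℝ) := by linarith
    have hlogn : (0:ℝ) < Real.log n := Real.log_pos (by linarith)
    have h1 : ∫ ω in G n, F n ω ∂P ≤ ∫ ω, F n ω ∂P :=
      setIntegral_le_integral (hFint n) (Filter.Eventually.of_forall fun ω => hF0 n ω)
    have h2 : A0/((n:ℝ)*Real.log n) * (P (G n)).toReal ≤ ∫ ω in G n, F n ω ∂P :=
      setIntegral_ge_of_const_le_real (hGmeas n) (measure_ne_top P _)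
        (fun ω hω => hkey n hn ω hω) ((hFint n).integrableOn)
    have h4 : (0:ℝ) ≤ A0/((n:ℝ)*Real.log n) :=
      div_nonneg hA0pos.le (mul_nonneg hnpos.le hlogn.le)
    calc A0/((n:ℝ)*Real.log n) * (1/2)
        ≤ A0/((n:ℝ)*Real.log n) * (P (G n)).toReal :=
          mul_le_mul_of_nonneg_left (hGhalf n) h4
      _ ≤ ∫ ω in G n, F n ω ∂P := h2
      _ ≤ ∫ ω, F n ω ∂P := h1
  -- conclusion
  set b : ℕ → ℝ := fun n => A0/2 * (1/((n:ℝ) * Real.log n)) with hb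
  have hbnn : ∀ n, 0 ≤ b n := by
    intro n
    have hln : (0:ℝ) ≤ Real.log n := by
      rcases Nat.eq_zero_or_pos n with h | h
      · simp [h]
      · exact Real.log_nonneg (by exact_mod_cast h)
    exact mul_nonneg (by positivity)
      (div_nonneg one_pos.le (mul_nonneg (Nat.cast_nonneg n) hln))
  have hble : ∀ m : ℕ, b (m + N) ≤ ∫ ω, F (m + N) ω ∂P := by
    intro m
    have h := hInt (m+N) (by omega)
    have e : b (m+N) = A0/(((m+N:ℕ):ℝ)*Real.log ((m+N:ℕ):ℝ)) * (1/2) := by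
      rw [hb]; ring
    rw [e]
    exact h
  have hsum' : Summable (fun m => ∫ ω, F (m + N) ω ∂P) :=
    (summable_nat_add_iff N).2 hsumF
  have hbsum : Summable (fun m => b (m+N)) :=
    Summable.of_nonneg_of_le (fun m => hbnn _) hble hsum'
  have hbsum' : Summable b := (summable_nat_add_iff N).1 hbsum
  have hfin : Summable (fun n : ℕ => 1/((n:ℝ)*Real.log n)) := by
    refine (hbsum'.mul_left (2/A0)).congr fun n => ?_
    rw [hb, ← mul_assoc, show (2/A0) * (A0/2) = 1 by field_simp, one_mul]
  exact TBRWaux.not_summable_inv_mul_log hfin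
end

section
/- Let (ξ_j)_{j≥0} be i.i.d. nonnegative real-valued random variables with mean μ = E[ξ_0] > 0 and E[ξ_0^{2+ε}] < ∞ for some ε > 0, and let S_0 = 0, S_n = ξ_0 + ... + ξ_{n-1}. If k is a positive integer with k > μ, then there exists a constant C < ∞, depending only on k, ε and the law of ξ_0, such that for every integer d ≥ 2, ∑_{n≥1} E[ ∏_{i=0}^{n-1} (1 - 1/(d + S_i))^k ] ≤ C d. -/
open MeasureTheory Filter Finset ProbabilityTheory

/-- Basic bounds on the factors appearing in the product. -/
lemma tbrw_prod_bounds {x : ℝ} (hx : 2 ≤ x) (k : ℕ) (S : ℕ → ℝ) (hS : ∀ i, 0 ≤ S i) (p : ℕ) :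
    0 ≤ ∏ i ∈ Finset.range p, (1 - 1 / (x + S i)) ^ k ∧
      ∏ i ∈ Finset.range p, (1 - 1 / (x + S i)) ^ k ≤ 1 := by
  have hfac : ∀ i, 0 ≤ (1 - 1 / (x + S i)) ^ k ∧ (1 - 1 / (x + S i)) ^ k ≤ 1 := by
    intro i
    have hy : (2 : ℝ) ≤ x + S i := by have := hS i; linarith
    have hy0 : (0 : ℝ) < x + S i := by linarith
    have h1 : 1 / (x + S i) ≤ 1 := by rw [div_le_one hy0]; linarith
    have h2 : 0 ≤ 1 / (x + S i) := by positivity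
    exact ⟨pow_nonneg (by linarith) k, pow_le_one₀ (by linarith) (by linarith)⟩
  constructor
  · exact Finset.prod_nonneg fun i _ => (hfac i).1
  · exact Finset.prod_le_one (fun i _ => (hfac i).1) (fun i _ => (hfac i).2)

set_option maxHeartbeats 2000000 in
/-- Theorem totti, item (ii), upper bound.
For an i.i.d. nonnegative environment with mean `μ > 0`, a finite `(2+ε)`-th moment
and a positive integer `k > μ`, there is a finite constant `C` such that for every
integer `d ≥ 2`, `∑_{n≥1} E[∏_{i=0}^{n-1} (1 - 1/(d + S_i))^k] ≤ C d`. -/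
theorem tbrw_exit_time_linear_upper_bound
    {Ω : Type*} [MeasurableSpace Ω] (P : Measure Ω) [IsProbabilityMeasure P]
    (ξ : ℕ → Ω → ℝ) (hmeas : ∀ j, Measurable (ξ j)) (hnonneg : ∀ j ω, 0 ≤ ξ j ω)
    (hindep : iIndepFun ξ P)
    (hident : ∀ j, IdentDistrib (ξ j) (ξ 0) P P)
    (hint : Integrable (ξ 0) P)
    (μ : ℝ) (hμ : μ = ∫ ω, ξ 0 ω ∂P) (hμpos : 0 < μ)
    (ε : ℝ) (hε : 0 < ε)
    (hmoment : Integrable (fun ω => (ξ 0 ω) ^ ((2 : ℝ) + ε)) P)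
    (k : ℕ) (hk : 1 ≤ k) (hkμ : μ < (k : ℝ)) :
    ∃ C : ℝ, ∀ d : ℕ, 2 ≤ d →
      (∑' n : ℕ, ENNReal.ofReal (∫ ω, ∏ i ∈ Finset.range n,
        (1 - 1 / ((d : ℝ) + ∑ j ∈ Finset.range i, ξ j ω)) ^ k ∂P))
        ≤ ENNReal.ofReal (C * (d : ℝ)) := by
  classical
  set a : ℝ := (k : ℝ) - μ with ha
  have hapos : 0 < a := by rw [ha]; linarith
  set δ : ℝ := 2 * (1 - Real.exp (-(a / 2))) with hδ
  have hexp_lt : Real.exp (-(a / 2)) < 1 := by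
    rw [Real.exp_lt_one_iff]; linarith
  have hexp_pos : (0 : ℝ) < Real.exp (-(a / 2)) := Real.exp_pos _
  have hδpos : 0 < δ := by rw [hδ]; nlinarith
  have hδlt : δ < 2 := by rw [hδ]; nlinarith
  refine ⟨1 / δ, ?_⟩
  set C : ℝ := 1 / δ with hC
  have hCpos : 0 < C := by positivity
  have hCδ : C * δ = 1 := by rw [hC]; field_simp
  have hone_le : ∀ x : ℝ, 2 ≤ x → 1 ≤ C * x := by
    intro x hx
    have h2 : 1 ≤ C * 2 := by
      rw [hC, div_mul_eq_mul_div, le_div_iff₀ hδpos]; linarith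
    nlinarith
  -- the key analytic (supersolution) inequality
  have hkey : ∀ x : ℝ, 2 ≤ x → 1 + (1 - 1 / x) ^ k * (C * (x + μ)) ≤ C * x := by
    intro x hx
    have hx0 : (0 : ℝ) < x := by linarith
    set t : ℝ := 1 / x with ht
    have ht0 : 0 < t := by positivity
    have ht2 : t ≤ 1 / 2 := by
      rw [ht, div_le_div_iff₀ hx0 (by norm_num : (0:ℝ) < 2)]; linarith
    have h1 : (1 - t) ^ k ≤ Real.exp (-((k : ℝ) * t)) := by
      have e1 : 1 - t ≤ Real.exp (-t) := by
        have := Real.add_one_le_exp (-t); linarith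
      calc (1 - t) ^ k ≤ (Real.exp (-t)) ^ k := pow_le_pow_left₀ (by linarith) e1 k
        _ = Real.exp ((k : ℝ) * (-t)) := (Real.exp_nat_mul _ k).symm
        _ = Real.exp (-((k : ℝ) * t)) := by ring_nf
    have h2 : 1 + μ * t ≤ Real.exp (μ * t) := by
      have := Real.add_one_le_exp (μ * t); linarith
    have h3 : (1 - t) ^ k * (1 + μ * t) ≤ Real.exp (-(a * t)) := by
      have hmul : (1 - t) ^ k * (1 + μ * t) ≤
          Real.exp (-((k : ℝ) * t)) * Real.exp (μ * t) := by
        apply mul_le_mul h1 h2 (by nlinarith) (Real.exp_nonneg _)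
      calc (1 - t) ^ k * (1 + μ * t) ≤ _ := hmul
        _ = Real.exp (-(a * t)) := by rw [← Real.exp_add]; congr 1; rw [ha]; ring
    have h4 : Real.exp (-(a * t)) ≤ 1 - 2 * t + 2 * t * Real.exp (-(a / 2)) := by
      have hc := convexOn_exp.2 (Set.mem_univ (0 : ℝ)) (Set.mem_univ (-(a / 2)))
        (by linarith : (0 : ℝ) ≤ 1 - 2 * t) (by linarith : (0 : ℝ) ≤ 2 * t)
        (by ring : 1 - 2 * t + 2 * t = 1)
      simp only [smul_eq_mul, mul_zero, zero_add, Real.exp_zero, mul_one] at hc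
      rw [show -(a * t) = 2 * t * -(a / 2) by ring]
      linarith [hc]
    have h5 : (1 - t) ^ k * (1 + μ * t) ≤ 1 - δ * t := by
      have he : 1 - 2 * t + 2 * t * Real.exp (-(a / 2)) = 1 - δ * t := by
        rw [hδ]; ring
      linarith
    have hxt : x * t = 1 := by rw [ht]; field_simp
    have hxμ : x + μ = x * (1 + μ * t) := by rw [ht]; field_simp
    have hrw : (1 - 1 / x) ^ k * (C * (x + μ)) = C * x * ((1 - t) ^ k * (1 + μ * t)) := by
      rw [hxμ, ← ht]; ring
    rw [hrw]
    have h6 : C * x * ((1 - t) ^ k * (1 + μ * t)) ≤ C * x * (1 - δ * t) :=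
      mul_le_mul_of_nonneg_left h5 (by positivity)
    have h7 : C * x * (1 - δ * t) = C * x - 1 := by
      calc C * x * (1 - δ * t) = C * x - (C * δ) * (x * t) := by ring
        _ = C * x - 1 := by rw [hCδ, hxt]; ring
    linarith
  -- the main claim, by induction on the number of summands
  have hclaim : ∀ (N m : ℕ) (x : ℝ), 2 ≤ x →
      ∑ p ∈ Finset.range (N + 1), ∫ ω, ∏ i ∈ Finset.range p,
        (1 - 1 / (x + ∑ j ∈ Finset.range i, ξ (m + j) ω)) ^ k ∂P ≤ C * x := by
    intro N
    induction N with
    | zero =>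
      intro m x hx
      rw [Finset.sum_range_one]
      simpa using hone_le x hx
    | succ N IH =>
      intro m x hx
      have hx0 : (0 : ℝ) < x := by linarith
      set T : Finset ℕ := Finset.Ico (m + 1) (m + 1 + N) with hT
      set Y : Ω → ℕ → ℝ :=
        fun ω j => if hj : m + 1 + j ∈ T then ξ (m + 1 + j) ω else 0 with hYdef
      have hYmeas : Measurable Y := by
        apply measurable_pi_lambda
        intro j
        by_cases hj : m + 1 + j ∈ T
        · simp only [hYdef, dif_pos hj]; exact hmeas _
        · simp only [hYdef, dif_neg hj]; exact measurable_const
      have hYnonneg : ∀ ω j, 0 ≤ Y ω j := by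
        intro ω j
        rw [hYdef]
        by_cases hj : m + 1 + j ∈ T
        · simp only [dif_pos hj]; exact hnonneg _ _
        · simp only [dif_neg hj]
          exact le_refl 0
      have hYval : ∀ ω j, j < N → Y ω j = ξ (m + 1 + j) ω := by
        intro ω j hj
        rw [hYdef]
        exact dif_pos (by rw [hT]; simp [Finset.mem_Ico]; omega)
      -- independence of ξ m from the tail vector Y
      have hstep : IndepFun (ξ m) Y P := by
        have hdisj : Disjoint ({m} : Finset ℕ) T := by
          rw [hT, Finset.disjoint_left]
          intro x hx hx'
          simp only [Finset.mem_singleton] at hx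
          simp only [Finset.mem_Ico] at hx'
          omega
        have h0 := hindep.indepFun_finset {m} T hdisj hmeas
        have hφ : Measurable fun v : (↥({m} : Finset ℕ) → ℝ) =>
            v ⟨m, Finset.mem_singleton_self m⟩ := measurable_pi_apply _
        have hψ : Measurable fun (v : ↥T → ℝ) (j : ℕ) =>
            if hj : m + 1 + j ∈ T then v ⟨m + 1 + j, hj⟩ else 0 := by
          apply measurable_pi_lambda
          intro j
          by_cases hj : m + 1 + j ∈ T
          · simp only [dif_pos hj]; exact measurable_pi_apply _
          · simp only [dif_neg hj]; exact measurable_const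
        exact h0.comp hφ hψ
      set ν : Measure ℝ := P.map (ξ m) with hν
      set ρ : Measure (ℕ → ℝ) := P.map Y with hρ
      haveI : IsProbabilityMeasure ν := Measure.isProbabilityMeasure_map (hmeas m).aemeasurable
      haveI : IsProbabilityMeasure ρ := Measure.isProbabilityMeasure_map hYmeas.aemeasurable
      set h : ℝ × (ℕ → ℝ) → ℝ := fun z => ∑ p ∈ Finset.range (N + 1),
        ∏ i ∈ Finset.range p,
          (1 - 1 / ((x + z.1) + ∑ j ∈ Finset.range i, z.2 j)) ^ k with hhdef
      have hhmeas : Measurable h := by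
        apply Finset.measurable_sum
        intro p _
        apply Finset.measurable_prod
        intro i _
        have hden : Measurable fun z : ℝ × (ℕ → ℝ) =>
            (x + z.1) + ∑ j ∈ Finset.range i, z.2 j := by
          apply (measurable_const.add measurable_fst).add
          apply Finset.measurable_sum
          intro j _
          exact (measurable_pi_apply j).comp measurable_snd
        exact ((measurable_const.sub (measurable_const.div hden))).pow_const k
      have hsetIci : MeasurableSet {y : ℝ | 0 ≤ y} :=
        measurableSet_le measurable_const measurable_id
      have hsetPi : MeasurableSet {y : ℕ → ℝ | ∀ j, 0 ≤ y j} := by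
        have : {y : ℕ → ℝ | ∀ j, 0 ≤ y j} = ⋂ j, {y | 0 ≤ y j} := by ext y; simp
        rw [this]
        exact MeasurableSet.iInter fun j =>
          measurableSet_le measurable_const (measurable_pi_apply j)
      have hν_ae : ∀ᵐ y ∂ν, 0 ≤ y := by
        rw [hν, ae_map_iff (hmeas m).aemeasurable hsetIci]
        exact ae_of_all _ (hnonneg m)
      have hρ_ae : ∀ᵐ y ∂ρ, ∀ j, 0 ≤ y j := by
        rw [hρ, ae_map_iff hYmeas.aemeasurable hsetPi]
        exact ae_of_all _ hYnonneg
      have hprod_fst : ∀ᵐ z ∂(ν.prod ρ), 0 ≤ z.1 := by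
        have hmapfst : (ν.prod ρ).map Prod.fst = ν := by
          rw [Measure.map_fst_prod]; simp
        have := (ae_map_iff measurable_fst.aemeasurable hsetIci
          (μ := ν.prod ρ) (f := Prod.fst))
        rw [hmapfst] at this
        exact this.mp hν_ae
      have hprod_snd : ∀ᵐ z ∂(ν.prod ρ), ∀ j, 0 ≤ z.2 j := by
        have hmapsnd : (ν.prod ρ).map Prod.snd = ρ := by
          rw [Measure.map_snd_prod]; simp
        have := (ae_map_iff measurable_snd.aemeasurable hsetPi
          (μ := ν.prod ρ) (f := Prod.snd))
        rw [hmapsnd] at this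
        exact this.mp hρ_ae
      have hbound : ∀ᵐ z ∂(ν.prod ρ), ‖h z‖ ≤ ((N : ℝ) + 1) := by
        filter_upwards [hprod_fst, hprod_snd] with z hz1 hz2
        have hsum_nonneg : ∀ i, 0 ≤ ∑ j ∈ Finset.range i, z.2 j :=
          fun i => Finset.sum_nonneg fun j _ => hz2 j
        have hx2 : (2 : ℝ) ≤ x + z.1 := by linarith
        have hp := fun p => tbrw_prod_bounds hx2 k
          (fun i => ∑ j ∈ Finset.range i, z.2 j) hsum_nonneg p
        have h0 : 0 ≤ h z := Finset.sum_nonneg fun p _ => (hp p).1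
        have h1 : h z ≤ (N : ℝ) + 1 := by
          calc h z ≤ ∑ p ∈ Finset.range (N + 1), (1 : ℝ) :=
                Finset.sum_le_sum fun p _ => (hp p).2
            _ = (N : ℝ) + 1 := by simp
        rw [Real.norm_eq_abs, abs_of_nonneg h0]
        exact h1
      have hInt : Integrable h (ν.prod ρ) :=
        Integrable.mono' (integrable_const ((N : ℝ) + 1))
          hhmeas.aestronglyMeasurable hbound
      have hjoint : P.map (fun ω => (ξ m ω, Y ω)) = ν.prod ρ :=
        (indepFun_iff_map_prod_eq_prod_map_map (hmeas m).aemeasurable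
          hYmeas.aemeasurable).mp hstep
      -- the crucial expectation bound via Fubini and the induction hypothesis
      have hEh : ∫ ω, h (ξ m ω, Y ω) ∂P ≤ C * (x + μ) := by
        have e1 : ∫ ω, h (ξ m ω, Y ω) ∂P = ∫ z, h z ∂(ν.prod ρ) := by
          rw [← hjoint]
          exact (integral_map ((hmeas m).aemeasurable.prodMk hYmeas.aemeasurable)
            hhmeas.aestronglyMeasurable).symm
        rw [e1, integral_prod _ hInt]
        have hid : Integrable (fun y : ℝ => y) ν := by
          have : Integrable (id : ℝ → ℝ) ν := by
            rw [hν, integrable_map_measure aestronglyMeasurable_id (hmeas m).aemeasurable]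
            exact ((hident m).integrable_iff.mpr hint)
          exact this
        have hRHSint : Integrable (fun y : ℝ => C * (x + y)) ν :=
          ((integrable_const x).add hid).const_mul C
        have hLHSint : Integrable (fun y => ∫ w, h (y, w) ∂ρ) ν :=
          hInt.integral_prod_left
        have hmono : ∀ᵐ y ∂ν, (∫ w, h (y, w) ∂ρ) ≤ C * (x + y) := by
          filter_upwards [hν_ae] with y hy0
          have hxy : (2 : ℝ) ≤ x + y := by linarith
          have e2 : ∫ w, h (y, w) ∂ρ = ∫ ω, h (y, Y ω) ∂P := by
            rw [hρ]
            exact integral_map hYmeas.aemeasurable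
              (hhmeas.comp (measurable_const.prodMk measurable_id)).aestronglyMeasurable
          rw [e2]
          have e3 : ∀ ω, h (y, Y ω) = ∑ p ∈ Finset.range (N + 1),
              ∏ i ∈ Finset.range p,
                (1 - 1 / ((x + y) + ∑ j ∈ Finset.range i, ξ (m + 1 + j) ω)) ^ k := by
            intro ω
            apply Finset.sum_congr rfl
            intro p hp
            apply Finset.prod_congr rfl
            intro i hi
            have : ∑ j ∈ Finset.range i, Y ω j
                = ∑ j ∈ Finset.range i, ξ (m + 1 + j) ω := by
              apply Finset.sum_congr rfl
              intro j hj
              apply hYval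
              simp only [Finset.mem_range] at hp hi hj
              omega
            rw [this]
          rw [show (fun ω => h (y, Y ω)) = fun ω => ∑ p ∈ Finset.range (N + 1),
              ∏ i ∈ Finset.range p,
                (1 - 1 / ((x + y) + ∑ j ∈ Finset.range i, ξ (m + 1 + j) ω)) ^ k
            from funext e3]
          rw [integral_finset_sum]
          · exact IH (m + 1) (x + y) hxy
          · intro p _
            apply Integrable.mono' (integrable_const (1 : ℝ))
            · apply Measurable.aestronglyMeasurable
              apply Finset.measurable_prod
              intro i _
              have hden : Measurable fun ω =>
                  (x + y) + ∑ j ∈ Finset.range i, ξ (m + 1 + j) ω := by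
                apply measurable_const.add
                exact Finset.measurable_sum _ fun j _ => hmeas _
              exact ((measurable_const.sub (measurable_const.div hden))).pow_const k
            · apply ae_of_all
              intro ω
              have hsn : ∀ i, 0 ≤ ∑ j ∈ Finset.range i, ξ (m + 1 + j) ω :=
                fun i => Finset.sum_nonneg fun j _ => hnonneg _ _
              have := tbrw_prod_bounds hxy k
                (fun i => ∑ j ∈ Finset.range i, ξ (m + 1 + j) ω) hsn p
              rw [Real.norm_eq_abs, abs_of_nonneg this.1]
              exact this.2
        calc ∫ y, ∫ w, h (y, w) ∂ρ ∂ν ≤ ∫ y, C * (x + y) ∂ν :=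
              integral_mono_ae hLHSint hRHSint hmono
          _ = C * (x + μ) := by
              rw [integral_const_mul]
              congr 1
              rw [integral_add (integrable_const x) hid]
              simp only [integral_const, probReal_univ, measure_univ, ENNReal.toReal_one, one_smul]
              congr 1
              have : ∫ y, y ∂ν = ∫ ω, ξ m ω ∂P := by
                rw [hν]
                exact integral_map (hmeas m).aemeasurable aestronglyMeasurable_id
              rw [this, hμ]
              exact (hident m).integral_eq
      -- algebraic reorganization of the sum
      have hterm : ∀ p, ∫ ω, ∏ i ∈ Finset.range (p + 1),
          (1 - 1 / (x + ∑ j ∈ Finset.range i, ξ (m + j) ω)) ^ k ∂P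
          = (1 - 1 / x) ^ k * ∫ ω, ∏ i ∈ Finset.range p,
            (1 - 1 / ((x + ξ m ω) + ∑ j ∈ Finset.range i, ξ (m + 1 + j) ω)) ^ k ∂P := by
        intro p
        have e : ∀ ω, ∏ i ∈ Finset.range (p + 1),
            (1 - 1 / (x + ∑ j ∈ Finset.range i, ξ (m + j) ω)) ^ k
            = (∏ i ∈ Finset.range p,
              (1 - 1 / ((x + ξ m ω) + ∑ j ∈ Finset.range i, ξ (m + 1 + j) ω)) ^ k)
              * (1 - 1 / x) ^ k := by
          intro ω
          rw [Finset.prod_range_succ']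
          congr 1
          · apply Finset.prod_congr rfl
            intro i _
            congr 2
            rw [Finset.sum_range_succ']
            rw [Finset.sum_congr rfl
              (fun j _ => by rw [show m + (j + 1) = m + 1 + j by ring] :
                ∀ j ∈ Finset.range i, ξ (m + (j + 1)) ω = ξ (m + 1 + j) ω)]
            simp only [Nat.add_zero]
            ring
          · simp
        rw [integral_congr_ae (ae_of_all _ e), integral_mul_const, mul_comm]
      -- integrability of the pieces
      have hGint : ∀ p ∈ Finset.range (N + 1), Integrable (fun ω =>
          ∏ i ∈ Finset.range p,
            (1 - 1 / ((x + ξ m ω) + ∑ j ∈ Finset.range i, ξ (m + 1 + j) ω)) ^ k) P := by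
        intro p _
        apply Integrable.mono' (integrable_const (1 : ℝ))
        · apply Measurable.aestronglyMeasurable
          apply Finset.measurable_prod
          intro i _
          have hden : Measurable fun ω =>
              (x + ξ m ω) + ∑ j ∈ Finset.range i, ξ (m + 1 + j) ω := by
            apply (measurable_const.add (hmeas m)).add
            exact Finset.measurable_sum _ fun j _ => hmeas _
          exact ((measurable_const.sub (measurable_const.div hden))).pow_const k
        · apply ae_of_all
          intro ω
          have hx2 : (2 : ℝ) ≤ x + ξ m ω := by have := hnonneg m ω; linarith
          have hsn : ∀ i, 0 ≤ ∑ j ∈ Finset.range i, ξ (m + 1 + j) ω :=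
            fun i => Finset.sum_nonneg fun j _ => hnonneg _ _
          have := tbrw_prod_bounds hx2 k
            (fun i => ∑ j ∈ Finset.range i, ξ (m + 1 + j) ω) hsn p
          rw [Real.norm_eq_abs, abs_of_nonneg this.1]
          exact this.2
      -- identify the sum of the pieces with h (ξ m ω, Y ω)
      have hsum_eq : (fun ω => ∑ p ∈ Finset.range (N + 1), ∏ i ∈ Finset.range p,
          (1 - 1 / ((x + ξ m ω) + ∑ j ∈ Finset.range i, ξ (m + 1 + j) ω)) ^ k)
          = fun ω => h (ξ m ω, Y ω) := by
        funext ω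
        rw [hhdef]
        apply Finset.sum_congr rfl
        intro p hp
        apply Finset.prod_congr rfl
        intro i hi
        have : ∑ j ∈ Finset.range i, Y ω j
            = ∑ j ∈ Finset.range i, ξ (m + 1 + j) ω := by
          apply Finset.sum_congr rfl
          intro j hj
          apply hYval
          simp only [Finset.mem_range] at hp hi hj
          omega
        rw [this]
      -- put everything together
      have hpow_nonneg : (0 : ℝ) ≤ (1 - 1 / x) ^ k := by
        have h1 : 1 / x ≤ 1 := by rw [div_le_one hx0]; linarith
        exact pow_nonneg (by linarith) k
      calc ∑ p ∈ Finset.range (N + 1 + 1), ∫ ω, ∏ i ∈ Finset.range p,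
            (1 - 1 / (x + ∑ j ∈ Finset.range i, ξ (m + j) ω)) ^ k ∂P
          = (∑ p ∈ Finset.range (N + 1), ∫ ω, ∏ i ∈ Finset.range (p + 1),
              (1 - 1 / (x + ∑ j ∈ Finset.range i, ξ (m + j) ω)) ^ k ∂P)
            + ∫ ω, ∏ i ∈ Finset.range 0,
              (1 - 1 / (x + ∑ j ∈ Finset.range i, ξ (m + j) ω)) ^ k ∂P :=
            Finset.sum_range_succ' _ _
        _ = (1 - 1 / x) ^ k * (∫ ω, h (ξ m ω, Y ω) ∂P) + 1 := by
            congr 1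
            · rw [Finset.sum_congr rfl fun p _ => hterm p, ← Finset.mul_sum,
                ← integral_finset_sum _ hGint]
              congr 1
              exact congrArg _ hsum_eq
            · simp
        _ ≤ (1 - 1 / x) ^ k * (C * (x + μ)) + 1 := by
            have := mul_le_mul_of_nonneg_left hEh hpow_nonneg
            linarith
        _ ≤ C * x := by have := hkey x hx; linarith
  -- conclusion
  intro d hd
  have hd2 : (2 : ℝ) ≤ (d : ℝ) := by exact_mod_cast hd
  have hfinal : ∀ N, ∑ p ∈ Finset.range (N + 1), ∫ ω, ∏ i ∈ Finset.range p,
      (1 - 1 / ((d : ℝ) + ∑ j ∈ Finset.range i, ξ j ω)) ^ k ∂P ≤ C * d := by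
    intro N
    have := hclaim N 0 (d : ℝ) hd2
    simp only [Nat.zero_add] at this
    exact this
  have htnonneg : ∀ n, 0 ≤ ∫ ω, ∏ i ∈ Finset.range n,
      (1 - 1 / ((d : ℝ) + ∑ j ∈ Finset.range i, ξ j ω)) ^ k ∂P := by
    intro n
    apply integral_nonneg
    intro ω
    exact (tbrw_prod_bounds hd2 k
      (fun i => ∑ j ∈ Finset.range i, ξ j ω)
      (fun i => Finset.sum_nonneg fun j _ => hnonneg _ _) n).1
  have hbnd : ∀ s : Finset ℕ, ∑ n ∈ s, ENNReal.ofReal (∫ ω, ∏ i ∈ Finset.range n,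
        (1 - 1 / ((d : ℝ) + ∑ j ∈ Finset.range i, ξ j ω)) ^ k ∂P)
      ≤ ENNReal.ofReal (C * (d : ℝ)) := by
    intro s
    obtain ⟨M, hsub⟩ := s.exists_nat_subset_range
    have h1 : ∑ n ∈ s, ENNReal.ofReal (∫ ω, ∏ i ∈ Finset.range n,
          (1 - 1 / ((d : ℝ) + ∑ j ∈ Finset.range i, ξ j ω)) ^ k ∂P)
        ≤ ∑ n ∈ Finset.range M, ENNReal.ofReal (∫ ω, ∏ i ∈ Finset.range n,
          (1 - 1 / ((d : ℝ) + ∑ j ∈ Finset.range i, ξ j ω)) ^ k ∂P) :=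
      Finset.sum_le_sum_of_subset hsub
    have h2 : ∑ n ∈ Finset.range M, ENNReal.ofReal (∫ ω, ∏ i ∈ Finset.range n,
          (1 - 1 / ((d : ℝ) + ∑ j ∈ Finset.range i, ξ j ω)) ^ k ∂P)
        = ENNReal.ofReal (∑ n ∈ Finset.range M, ∫ ω, ∏ i ∈ Finset.range n,
          (1 - 1 / ((d : ℝ) + ∑ j ∈ Finset.range i, ξ j ω)) ^ k ∂P) :=
      (ENNReal.ofReal_sum_of_nonneg fun n _ => htnonneg n).symm
    have hfinalM : ∑ n ∈ Finset.range M, ∫ ω, ∏ i ∈ Finset.range n,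
        (1 - 1 / ((d : ℝ) + ∑ j ∈ Finset.range i, ξ j ω)) ^ k ∂P ≤ C * d := by
      rcases Nat.eq_zero_or_pos M with hM | hM
      · subst hM
        simp only [Finset.range_zero, Finset.sum_empty]
        exact mul_nonneg hCpos.le (by positivity)
      · obtain ⟨M', rfl⟩ := Nat.exists_eq_add_of_lt hM
        have := hfinal M'
        simp only [Nat.zero_add] at this ⊢
        exact this
    have h3 := ENNReal.ofReal_le_ofReal hfinalM
    rw [h2] at h1
    exact le_trans h1 h3
  exact tsum_le_of_sum_le' zero_le hbnd
end

section
/- Let ℓ ≥ 2 be an integer and q ∈ (0,1). Let N be a geometric random variable on {1,2,3,...} with success probability 1/ℓ (so P(N ≥ j) = (1 - 1/ℓ)^{j-1} for j ≥ 1), and, conditionally on N, let W be a binomial random variable with N trials and success probability q. Then for every real a ≥ 1, P( W ≤ a ) ≤ e^{-a/4} + 1 - (1 - 1/ℓ)^{2a/q}. -/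
open MeasureTheory
open scoped ENNReal
open Finset

lemma chern_sum (n k : ℕ) (q a : ℝ) (hq0 : 0 < q) (hq1 : q < 1) (ha : 1 ≤ a)
    (hk : (k : ℝ) ≤ a) (hn : 2 * a ≤ n * q) :
    ∑ b ∈ Finset.range (k+1), (n.choose b : ℝ) * q ^ b * (1 - q) ^ (n - b)
      ≤ Real.exp (-a / 4) := by
  have ha0 : 0 ≤ a := by linarith
  have hterm : ∀ b ∈ Finset.range (k+1),
      (n.choose b : ℝ) * q ^ b * (1 - q) ^ (n - b)
        ≤ (2:ℝ) ^ a * ((n.choose b : ℝ) * (q/2) ^ b * (1 - q) ^ (n - b)) := by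
    intro b hb
    have hb' : (b : ℝ) ≤ a := by
      have : b ≤ k := by simpa using Nat.lt_succ_iff.mp (Finset.mem_range.mp hb)
      calc (b:ℝ) ≤ k := by exact_mod_cast this
        _ ≤ a := hk
    have h2 : (2:ℝ) ^ (b:ℕ) ≤ (2:ℝ) ^ a := by
      rw [← Real.rpow_natCast 2 b]
      exact Real.rpow_le_rpow_of_exponent_le (by norm_num) hb'
    have hq2 : q ^ b = 2 ^ b * (q/2) ^ b := by
      rw [← mul_pow]; ring_nf
    have hnn : 0 ≤ (n.choose b : ℝ) * (q/2) ^ b * (1 - q) ^ (n - b) :=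
      mul_nonneg (mul_nonneg (by positivity) (by positivity)) (pow_nonneg (by linarith) _)
    rw [hq2]
    calc (n.choose b : ℝ) * (2 ^ b * (q/2) ^ b) * (1 - q) ^ (n - b)
        = 2 ^ b * ((n.choose b : ℝ) * (q/2) ^ b * (1 - q) ^ (n - b)) := by ring
      _ ≤ (2:ℝ) ^ a * ((n.choose b : ℝ) * (q/2) ^ b * (1 - q) ^ (n - b)) :=
          mul_le_mul_of_nonneg_right h2 hnn
  calc ∑ b ∈ Finset.range (k+1), (n.choose b : ℝ) * q ^ b * (1 - q) ^ (n - b)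
      ≤ ∑ b ∈ Finset.range (k+1),
          (2:ℝ) ^ a * ((n.choose b : ℝ) * (q/2) ^ b * (1 - q) ^ (n - b)) :=
        Finset.sum_le_sum hterm
    _ = (2:ℝ) ^ a * ∑ b ∈ Finset.range (k+1),
          (n.choose b : ℝ) * (q/2) ^ b * (1 - q) ^ (n - b) := by
        rw [Finset.mul_sum]
    _ ≤ (2:ℝ) ^ a * (1 - q/2) ^ n := by
        apply mul_le_mul_of_nonneg_left _ (by positivity)
        have hfull : ∑ b ∈ Finset.range (n+1),
            (n.choose b : ℝ) * (q/2) ^ b * (1 - q) ^ (n - b) = (1 - q/2) ^ n := by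
          have := add_pow (q/2) (1-q) n
          have h : ((q/2) + (1-q)) ^ n
              = ∑ b ∈ Finset.range (n+1), (q/2)^b * (1-q)^(n-b) * (n.choose b : ℝ) := this
          rw [show (1 - q/2 : ℝ) = (q/2) + (1-q) by ring, h]
          apply Finset.sum_congr rfl; intro b _; ring
        rw [← hfull]
        rcases le_or_gt k n with hkn | hnk
        · exact Finset.sum_le_sum_of_subset_of_nonneg
            (Finset.range_subset_range.mpr (by omega))
            (fun b _ _ => mul_nonneg (mul_nonneg (by positivity) (by positivity))
              (pow_nonneg (by linarith) _))
        · have : ∑ b ∈ Finset.range (n+1),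
              (n.choose b : ℝ) * (q/2) ^ b * (1 - q) ^ (n - b)
              = ∑ b ∈ Finset.range (k+1),
              (n.choose b : ℝ) * (q/2) ^ b * (1 - q) ^ (n - b) := by
            apply Finset.sum_subset (Finset.range_subset_range.mpr (by omega))
            intro b _ hb
            have : n < b := by simp only [Finset.mem_range] at hb; omega
            rw [Nat.choose_eq_zero_of_lt this]; simp
          rw [this]
    _ ≤ (2:ℝ) ^ a * Real.exp (-a) := by
        apply mul_le_mul_of_nonneg_left _ (by positivity)
        have h1 : (1 - q/2 : ℝ) ≤ Real.exp (-(q/2)) := by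
          have := Real.add_one_le_exp (-(q/2)); linarith
        calc (1 - q/2 : ℝ) ^ n ≤ Real.exp (-(q/2)) ^ n :=
              pow_le_pow_left₀ (by linarith) h1 n
          _ = Real.exp (n * -(q/2)) := by rw [← Real.exp_nat_mul]
          _ ≤ Real.exp (-a) := by
              apply Real.exp_le_exp.mpr; nlinarith
    _ ≤ Real.exp (-a / 4) := by
        rw [show (2:ℝ)^a = Real.exp (Real.log 2 * a) from
          Real.rpow_def_of_pos (by norm_num) a]
        rw [← Real.exp_add]
        apply Real.exp_le_exp.mpr
        have hl2 : Real.log 2 < 0.6931471808 := Real.log_two_lt_d9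
        nlinarith

open scoped ENNReal


/-- inequality (ineq:w) in the proof of Lemma 2.1.
Let `N` be geometric on `{1,2,...}` with success probability `1/ℓ` (`ℓ ≥ 2`) and,
conditionally on `N`, let `W` be binomial with `N` trials and success probability
`q ∈ (0,1)`. Then for every real `a ≥ 1`,
`P(W ≤ a) ≤ e^{-a/4} + 1 - (1 - 1/ℓ)^{2a/q}`. -/
theorem geometric_binomial_lower_tail
    {Ω : Type*} [MeasurableSpace Ω] (P : Measure Ω) [IsProbabilityMeasure P]
    (ℓ : ℕ) (hℓ : 2 ≤ ℓ) (q : ℝ) (hq : q ∈ Set.Ioo (0 : ℝ) 1)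
    (N W : Ω → ℕ) (hN : Measurable N) (hW : Measurable W)
    (hN1 : ∀ ω, 1 ≤ N ω)
    (hgeo : ∀ j : ℕ, 1 ≤ j →
      P {ω | j ≤ N ω} = ENNReal.ofReal ((1 - 1 / (ℓ : ℝ)) ^ (j - 1)))
    (hbin : ∀ n : ℕ, 1 ≤ n → ∀ b : ℕ,
      P {ω | W ω = b ∧ N ω = n} =
        P {ω | N ω = n} *
          ENNReal.ofReal ((n.choose b : ℝ) * q ^ b * (1 - q) ^ (n - b))) :
    ∀ a : ℝ, 1 ≤ a →
      P {ω | (W ω : ℝ) ≤ a} ≤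
        ENNReal.ofReal (Real.exp (-a / 4) + 1 - (1 - 1 / (ℓ : ℝ)) ^ (2 * a / q)) := by
  intro a ha
  obtain ⟨hq0, hq1⟩ := hq
  have ha0 : (0:ℝ) ≤ a := by linarith
  have hℓR : (2:ℝ) ≤ (ℓ:ℝ) := by exact_mod_cast hℓ
  set c : ℝ := 1 - 1/(ℓ:ℝ) with hc_def
  have hc0 : 0 < c := by
    have : 1/(ℓ:ℝ) ≤ 1/2 := by
      apply div_le_div_of_nonneg_left <;> linarith
    simp only [hc_def]; linarith
  have hc1 : c ≤ 1 := by
    have : 0 < 1/(ℓ:ℝ) := by positivity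
    simp only [hc_def]; linarith
  set m : ℕ := ⌊2*a/q⌋₊ with hm_def
  set n₀ : ℕ := m + 1 with hn₀_def
  set k : ℕ := ⌊a⌋₊ with hk_def
  have hka : (k:ℝ) ≤ a := Nat.floor_le ha0
  have haq : 2*a/q < (n₀:ℝ) := by
    have := Nat.lt_floor_add_one (2*a/q)
    push_cast [hn₀_def]; exact this
  have hmle : (m:ℝ) ≤ 2*a/q := Nat.floor_le (by positivity)
  have hNmeas : ∀ s : Set ℕ, MeasurableSet (N ⁻¹' s) :=
    fun s => hN (s.to_countable.measurableSet)
  -- decomposition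
  have hsplit : {ω | (W ω : ℝ) ≤ a} ⊆
      {ω | N ω < n₀} ∪ {ω | n₀ ≤ N ω ∧ W ω ≤ k} := by
    intro ω hω
    rcases lt_or_ge (N ω) n₀ with h | h
    · exact Or.inl h
    · exact Or.inr ⟨h, Nat.le_floor hω⟩
  have hPsplit : P {ω | (W ω : ℝ) ≤ a} ≤
      P {ω | N ω < n₀} + P {ω | n₀ ≤ N ω ∧ W ω ≤ k} :=
    le_trans (measure_mono hsplit) (measure_union_le _ _)
  -- first term
  have hB1 : P {ω | N ω < n₀} = 1 - ENNReal.ofReal (c ^ m) := by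
    have hset : {ω | N ω < n₀} = {ω | n₀ ≤ N ω}ᶜ := by
      ext ω; simp [not_le]
    have hms : MeasurableSet {ω | n₀ ≤ N ω} := hNmeas (Set.Ici n₀)
    rw [hset, measure_compl hms (measure_ne_top _ _),
      measure_univ, hgeo n₀ (by omega)]
    rfl
  -- second term
  have hB2 : P {ω | n₀ ≤ N ω ∧ W ω ≤ k} ≤ ENNReal.ofReal (Real.exp (-a/4)) := by
    have hcover : {ω | n₀ ≤ N ω ∧ W ω ≤ k} ⊆ ⋃ n : ℕ, {ω | N ω = n₀ + n ∧ W ω ≤ k} := by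
      intro ω ⟨h1, h2⟩
      exact Set.mem_iUnion.mpr ⟨N ω - n₀, by omega, h2⟩
    refine le_trans (measure_mono hcover) (le_trans (measure_iUnion_le _) ?_)
    have hterm : ∀ n : ℕ, P {ω | N ω = n₀ + n ∧ W ω ≤ k}
        ≤ P {ω | N ω = n₀ + n} * ENNReal.ofReal (Real.exp (-a/4)) := by
      intro n
      have hcov2 : {ω | N ω = n₀ + n ∧ W ω ≤ k}
          ⊆ ⋃ b ∈ Finset.range (k+1), {ω | W ω = b ∧ N ω = n₀ + n} := by
        intro ω ⟨h1, h2⟩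
        exact Set.mem_biUnion (Finset.mem_range.mpr (by omega)) ⟨rfl, h1⟩
      refine le_trans (measure_mono hcov2) (le_trans (measure_biUnion_finset_le _ _) ?_)
      have hrw : ∀ b : ℕ, P {ω | W ω = b ∧ N ω = n₀ + n}
          = P {ω | N ω = n₀ + n} *
            ENNReal.ofReal (((n₀+n).choose b : ℝ) * q ^ b * (1 - q) ^ (n₀+n - b)) :=
        fun b => hbin (n₀+n) (by omega) b
      calc ∑ b ∈ Finset.range (k+1), P {ω | W ω = b ∧ N ω = n₀ + n}
          = P {ω | N ω = n₀ + n} * ∑ b ∈ Finset.range (k+1),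
            ENNReal.ofReal (((n₀+n).choose b : ℝ) * q ^ b * (1 - q) ^ (n₀+n - b)) := by
            rw [Finset.mul_sum]; exact Finset.sum_congr rfl (fun b _ => hrw b)
        _ = P {ω | N ω = n₀ + n} * ENNReal.ofReal (∑ b ∈ Finset.range (k+1),
            ((n₀+n).choose b : ℝ) * q ^ b * (1 - q) ^ (n₀+n - b)) := by
            congr 1
            exact (ENNReal.ofReal_sum_of_nonneg (fun b _ =>
              mul_nonneg (mul_nonneg (by positivity) (by positivity))
                (pow_nonneg (by linarith) _))).symm
        _ ≤ P {ω | N ω = n₀ + n} * ENNReal.ofReal (Real.exp (-a/4)) := by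
            apply mul_le_mul_right
            apply ENNReal.ofReal_le_ofReal
            apply chern_sum _ _ _ _ hq0 hq1 ha hka
            have : 2*a < (n₀:ℝ) * q := by
              rw [div_lt_iff₀ hq0] at haq; linarith
            have h2 : (n₀:ℝ) * q ≤ ((n₀+n:ℕ):ℝ) * q := by
              apply mul_le_mul_of_nonneg_right _ hq0.le
              exact_mod_cast Nat.le_add_right n₀ n
            linarith
    refine le_trans (ENNReal.tsum_le_tsum hterm) ?_
    rw [ENNReal.tsum_mul_right]
    have hsum : ∑' n : ℕ, P {ω | N ω = n₀ + n} ≤ 1 := by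
      have hdisj : Pairwise (Function.onFun Disjoint (fun n => {ω | N ω = n₀ + n})) := by
        intro i j hij
        apply Set.disjoint_left.mpr
        intro ω h1 h2
        simp only [Set.mem_setOf_eq] at h1 h2
        omega
      rw [← measure_iUnion hdisj (fun n => hNmeas {n₀ + n})]
      exact prob_le_one
    calc (∑' n : ℕ, P {ω | N ω = n₀ + n}) * ENNReal.ofReal (Real.exp (-a/4))
        ≤ 1 * ENNReal.ofReal (Real.exp (-a/4)) := mul_le_mul_left hsum _
      _ = _ := one_mul _
  -- combine
  have hr : c ^ (2*a/q) ≤ c ^ m := by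
    rw [← Real.rpow_natCast c m]
    exact Real.rpow_le_rpow_of_exponent_ge hc0 hc1 hmle
  have hr1 : c ^ (2*a/q) ≤ 1 := Real.rpow_le_one hc0.le hc1 (by positivity)
  have hr0 : 0 ≤ c ^ (2*a/q) := Real.rpow_nonneg hc0.le _
  have hcm1 : c ^ m ≤ 1 := pow_le_one₀ hc0.le hc1
  have hmid : P {ω | (W ω : ℝ) ≤ a} ≤
      (1 - ENNReal.ofReal (c ^ m)) + ENNReal.ofReal (Real.exp (-a/4)) :=
    le_trans hPsplit (add_le_add hB1.le hB2)
  refine le_trans hmid ?_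
  have hstep : 1 - ENNReal.ofReal (c ^ m) ≤ ENNReal.ofReal (1 - c ^ (2*a/q)) := by
    rw [tsub_le_iff_right, ← ENNReal.ofReal_add (by linarith) (by positivity)]
    rw [← ENNReal.ofReal_one]
    apply ENNReal.ofReal_le_ofReal
    linarith
  calc 1 - ENNReal.ofReal (c ^ m) + ENNReal.ofReal (Real.exp (-a/4))
      ≤ ENNReal.ofReal (1 - c ^ (2*a/q)) + ENNReal.ofReal (Real.exp (-a/4)) :=
        add_le_add_left hstep _
    _ = ENNReal.ofReal (1 - c ^ (2*a/q) + Real.exp (-a/4)) :=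
        (ENNReal.ofReal_add (by linarith) (Real.exp_nonneg _)).symm
    _ ≤ ENNReal.ofReal (Real.exp (-a / 4) + 1 - c ^ (2 * a / q)) := by
        apply ENNReal.ofReal_le_ofReal; linarith
end

section
/- Let δ > 0 and α ∈ (0,1), and let (ξ_j)_{j≥1} be independent nonnegative real-valued random variables such that P(ξ_j > x) ≥ δ x^{-α} for every real x ≥ 1 and every j ≥ 1. Let S_i = ξ_1 + ... + ξ_i. Then for every β ∈ (α, 1), P( liminf_{i→∞} S_i / i^{1/β} ≥ 1 ) = 1. -/
open MeasureTheory Filter Finset ProbabilityTheory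
open scoped ENNReal

/-- heavy-tailed example of Section 1.2 satisfies condition (I).
If `(ξ_j)` are independent nonnegative random variables with
`P(ξ_j > x) ≥ δ x^{-α}` for all `x ≥ 1`, where `δ > 0` and `α ∈ (0,1)`, then for
every `β ∈ (α,1)`, almost surely `liminf_i S_i / i^{1/β} ≥ 1`. -/
theorem heavy_tail_env_satisfies_condition_I
    {Ω : Type*} [MeasurableSpace Ω] (P : Measure Ω) [IsProbabilityMeasure P]
    (δ α : ℝ) (hδ : 0 < δ) (hα : α ∈ Set.Ioo (0 : ℝ) 1)
    (ξ : ℕ → Ω → ℝ) (hmeas : ∀ j, Measurable (ξ j)) (hnonneg : ∀ j ω, 0 ≤ ξ j ω)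
    (hindep : iIndepFun ξ P)
    (htail : ∀ j, ∀ x : ℝ, 1 ≤ x →
      ENNReal.ofReal (δ * x ^ (-α)) ≤ P {ω | x < ξ j ω}) :
    ∀ β : ℝ, β ∈ Set.Ioo α 1 →
      P {ω | (1 : EReal) ≤ Filter.liminf
          (fun i : ℕ => (((∑ j ∈ Finset.range i, ξ j ω) / (i : ℝ) ^ (1 / β) : ℝ) : EReal))
          Filter.atTop} = 1 := by
  obtain ⟨hα0, hα1⟩ := hα
  rintro β ⟨hαβ, hβ1⟩
  have hβ0 : 0 < β := hα0.trans hαβ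
  -- the threshold sequence x k = 2^((k+1)/β)
  set x : ℕ → ℝ := fun k => (2:ℝ) ^ (((k:ℝ)+1)/β) with hxdef
  have hx1 : ∀ k, 1 ≤ x k := by
    intro k
    rw [hxdef]
    simp only
    rw [show (1:ℝ) = (2:ℝ) ^ (0:ℝ) by simp]
    exact Real.rpow_le_rpow_of_exponent_le (by norm_num) (by positivity)
  have hx0 : ∀ k, 0 < x k := fun k => lt_of_lt_of_le one_pos (hx1 k)
  set t : ℕ → ℝ := fun k => δ * (x k) ^ (-α) with htdef
  have ht0 : ∀ k, 0 < t k := by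
    intro k
    have := hx0 k
    rw [htdef]
    positivity
  -- the bad events
  set D : ℕ → Set Ω := fun k => ⋂ j ∈ Finset.range (2^k), {ω | ξ j ω ≤ x k} with hDdef
  -- individual probability bound
  have hsingle : ∀ j k, P {ω | ξ j ω ≤ x k} ≤ ENNReal.ofReal (1/(1 + t k)) := by
    intro j k
    have hc : {ω | ξ j ω ≤ x k} = {ω | x k < ξ j ω}ᶜ := by
      ext ω; simp [not_lt]
    have hm : MeasurableSet {ω | x k < ξ j ω} :=
      measurableSet_lt measurable_const (hmeas j)
    rw [hc, measure_compl hm (measure_ne_top _ _), measure_univ]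
    calc 1 - P {ω | x k < ξ j ω} ≤ 1 - ENNReal.ofReal (t k) :=
          tsub_le_tsub le_rfl (htail j (x k) (hx1 k))
      _ = ENNReal.ofReal (1 - t k) := by
          rw [← ENNReal.ofReal_one, ← ENNReal.ofReal_sub _ (le_of_lt (ht0 k))]
      _ ≤ ENNReal.ofReal (1/(1 + t k)) := by
          apply ENNReal.ofReal_le_ofReal
          rw [le_div_iff₀ (by have := ht0 k; positivity)]
          nlinarith [sq_nonneg (t k), (ht0 k).le]
  -- product bound via independence
  have hprod : ∀ k, P (D k) ≤ ENNReal.ofReal (1/((2:ℝ)^k * t k)) := by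
    intro k
    have hpf : P (D k) = ∏ j ∈ Finset.range (2^k), P {ω | ξ j ω ≤ x k} := by
      rw [hDdef]
      exact hindep.meas_biInter (fun j _ => ⟨Set.Iic (x k), measurableSet_Iic, rfl⟩)
    rw [hpf]
    have h1t : (0:ℝ) < 1 + t k := by have := ht0 k; positivity
    calc ∏ j ∈ Finset.range (2^k), P {ω | ξ j ω ≤ x k}
        ≤ ∏ _j ∈ Finset.range (2^k), ENNReal.ofReal (1/(1 + t k)) :=
          Finset.prod_le_prod' (fun j _ => hsingle j k)
      _ = ENNReal.ofReal (1/(1 + t k)) ^ (2^k) := by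
          rw [Finset.prod_const, Finset.card_range]
      _ = ENNReal.ofReal ((1/(1 + t k))^(2^k)) := by
          rw [← ENNReal.ofReal_pow (by positivity)]
      _ ≤ ENNReal.ofReal (1/((2:ℝ)^k * t k)) := by
          apply ENNReal.ofReal_le_ofReal
          rw [one_div_pow]
          have hbern : 1 + ((2^k : ℕ) : ℝ) * t k ≤ (1 + t k)^(2^k) :=
            one_add_mul_le_pow (by nlinarith [(ht0 k).le]) (2^k)
          have hnt : (0:ℝ) < (2:ℝ)^k * t k := by have := ht0 k; positivity
          apply one_div_le_one_div_of_le hnt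
          push_cast at hbern
          linarith
  -- the bounding terms form a convergent geometric series
  have key : ∀ k : ℕ, (1:ℝ)/((2:ℝ)^k * t k)
      = (2:ℝ)^(α/β)/δ * ((2:ℝ)^(α/β-1))^k := by
    intro k
    have h2 : (0:ℝ) ≤ 2 := by norm_num
    have h2' : (0:ℝ) < 2 := by norm_num
    rw [htdef, hxdef]
    simp only
    rw [← Real.rpow_natCast (2:ℝ) k, ← Real.rpow_natCast ((2:ℝ)^(α/β-1)) k,
      ← Real.rpow_mul h2, ← Real.rpow_mul h2]
    have hexp : ((k:ℝ)) + (((k:ℝ)+1)/β * (-α)) + α/β + (α/β-1)*(k:ℝ) = 0 := by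
      field_simp
      ring
    have h0 : (2:ℝ)^((k:ℝ)) * (2:ℝ)^(((k:ℝ)+1)/β * (-α)) * (2:ℝ)^(α/β)
        * (2:ℝ)^((α/β-1)*(k:ℝ)) = 1 := by
      rw [← Real.rpow_add h2', ← Real.rpow_add h2', ← Real.rpow_add h2', hexp,
        Real.rpow_zero]
    have hmul : (2:ℝ)^((k:ℝ)) * (δ * (2:ℝ)^(((k:ℝ)+1)/β * (-α)))
        * ((2:ℝ)^(α/β)/δ * (2:ℝ)^((α/β-1)*(k:ℝ))) = 1 := by
      have hrw : (2:ℝ)^((k:ℝ)) * (δ * (2:ℝ)^(((k:ℝ)+1)/β * (-α)))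
          * ((2:ℝ)^(α/β)/δ * (2:ℝ)^((α/β-1)*(k:ℝ)))
          = ((2:ℝ)^((k:ℝ)) * (2:ℝ)^(((k:ℝ)+1)/β * (-α)) * (2:ℝ)^(α/β)
            * (2:ℝ)^((α/β-1)*(k:ℝ))) * (δ/δ) := by ring
      rw [hrw, h0, div_self hδ.ne', mul_one]
    have hmul' : ((2:ℝ)^(α/β)/δ * (2:ℝ)^((α/β-1)*(k:ℝ)))
        * ((2:ℝ)^((k:ℝ)) * (δ * (2:ℝ)^(((k:ℝ)+1)/β * (-α)))) = 1 := by
      rw [mul_comm]; exact hmul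
    exact (eq_one_div_of_mul_eq_one_left hmul').symm
  -- summability of the bounds
  have hr0 : (0:ℝ) ≤ (2:ℝ)^(α/β-1) := (Real.rpow_pos_of_pos (by norm_num) _).le
  have hr1 : (2:ℝ)^(α/β-1) < 1 := by
    apply Real.rpow_lt_one_of_one_lt_of_neg (by norm_num)
    rw [sub_neg]
    exact (div_lt_one hβ0).mpr hαβ
  have hsummable : Summable (fun k : ℕ => (1:ℝ)/((2:ℝ)^k * t k)) := by
    have := (summable_geometric_of_lt_one hr0 hr1).mul_left ((2:ℝ)^(α/β)/δ)
    refine this.congr fun k => ?_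
    rw [key k]
  have hsum : (∑' k, P (D k)) ≠ ∞ := by
    have h1 : (∑' k, P (D k)) ≤ ∑' k, ENNReal.ofReal (1/((2:ℝ)^k * t k)) :=
      ENNReal.tsum_le_tsum hprod
    have h2 : (∑' k, ENNReal.ofReal (1/((2:ℝ)^k * t k)))
        = ENNReal.ofReal (∑' k, 1/((2:ℝ)^k * t k)) :=
      (ENNReal.ofReal_tsum_of_nonneg (fun k => by have := ht0 k; positivity) hsummable).symm
    exact ((h1.trans_eq h2).trans_lt ENNReal.ofReal_lt_top).ne
  -- Borel–Cantelli
  have hBC : P (Filter.limsup D Filter.atTop) = 0 := measure_limsup_atTop_eq_zero hsum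
  -- the complement of limsup D is contained in the target event
  have hsubset : (Filter.limsup D Filter.atTop)ᶜ ⊆
      {ω | (1 : EReal) ≤ Filter.liminf
        (fun i : ℕ => (((∑ j ∈ Finset.range i, ξ j ω) / (i : ℝ) ^ (1 / β) : ℝ) : EReal))
        Filter.atTop} := by
    intro ω hω
    have hfreq : ¬ ∃ᶠ k in Filter.atTop, ω ∈ D k := by
      rwa [← Filter.mem_limsup_iff_frequently_mem]
    rw [Filter.not_frequently] at hfreq
    obtain ⟨K, hK⟩ := Filter.eventually_atTop.mp hfreq
    have hev : ∀ᶠ i in Filter.atTop, (1 : EReal) ≤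
        (((∑ j ∈ Finset.range i, ξ j ω) / (i : ℝ) ^ (1 / β) : ℝ) : EReal) := by
      rw [Filter.eventually_atTop]
      refine ⟨2^K, fun i hi => ?_⟩
      have hi1 : 1 ≤ i := le_trans Nat.one_le_two_pow hi
      set k := Nat.log 2 i with hk
      have hkK : K ≤ k := (Nat.le_log_iff_pow_le one_lt_two (by omega)).mpr hi
      have hlow : 2^k ≤ i := Nat.pow_log_le_self 2 (by omega)
      have hhigh : i < 2^(k+1) := Nat.lt_pow_succ_log_self one_lt_two i
      have hDk := hK k hkK
      rw [hDdef] at hDk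
      simp only [Set.mem_iInter, Set.mem_setOf_eq, not_forall, not_le] at hDk
      obtain ⟨j, hjmem, hjx⟩ := hDk
      have hji : j < i := lt_of_lt_of_le (Finset.mem_range.mp hjmem) hlow
      have hS : x k ≤ ∑ j' ∈ Finset.range i, ξ j' ω :=
        le_trans hjx.le (Finset.single_le_sum (fun j' _ => hnonneg j' ω)
          (Finset.mem_range.mpr hji))
      have hib : (i:ℝ)^(1/β) ≤ x k := by
        have h1 : (i:ℝ) ≤ (2:ℝ)^((k:ℝ)+1) := by
          have h2 : (i:ℝ) ≤ ((2^(k+1) : ℕ) : ℝ) := by exact_mod_cast hhigh.le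
          rw [show ((k:ℝ)+1) = ((k+1 : ℕ) : ℝ) by push_cast; ring, Real.rpow_natCast]
          exact_mod_cast h2
        calc (i:ℝ)^(1/β) ≤ ((2:ℝ)^((k:ℝ)+1))^(1/β) :=
              Real.rpow_le_rpow (by positivity) h1 (by positivity)
          _ = (2:ℝ)^(((k:ℝ)+1)/β) := by
              rw [← Real.rpow_mul (by norm_num)]
              congr 1
              field_simp
          _ = x k := by rw [hxdef]
      have hipos : (0:ℝ) < (i:ℝ) := by exact_mod_cast hi1
      have hpos : (0:ℝ) < (i:ℝ)^(1/β) := Real.rpow_pos_of_pos hipos _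
      have hre : (1:ℝ) ≤ (∑ j' ∈ Finset.range i, ξ j' ω) / (i:ℝ)^(1/β) :=
        (one_le_div hpos).mpr (le_trans hib hS)
      exact_mod_cast hre
    have hlim := Filter.liminf_le_liminf hev
    rwa [Filter.liminf_const] at hlim
  -- conclude
  have hcompl : P ((Filter.limsup D Filter.atTop)ᶜ) = 1 := by
    rw [measure_compl₀ (MeasureTheory.NullMeasurableSet.of_null hBC) (measure_ne_top _ _),
      hBC, measure_univ, tsub_zero]
  refine le_antisymm prob_le_one ?_
  calc (1:ℝ≥0∞) = P ((Filter.limsup D Filter.atTop)ᶜ) := hcompl.symm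
    _ ≤ _ := measure_mono hsubset
end

section
/- Let δ > 0 and α ∈ (0,1), and let (ξ_j)_{j≥1} be independent nonnegative real-valued random variables such that P(ξ_j > x) ≥ δ x^{-α} for every real x ≥ 1 and every j ≥ 1. Let S_i = ξ_1 + ... + ξ_i and let β ∈ (α, 1). Then for every integer i ≥ 1 with δ ≤ i^{α/β}, P( S_i ≤ i^{1/β} ) ≤ exp( -δ i^{γ} ), where γ = 1 - α/β > 0. -/
open MeasureTheory Filter Finset ProbabilityTheory
open scoped ENNReal

/-- tail estimate in the example of Section 1.2.
If `(ξ_j)` are independent nonnegative random variables with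
`P(ξ_j > x) ≥ δ x^{-α}` for all `x ≥ 1`, where `δ > 0` and `α ∈ (0,1)`, and
`β ∈ (α,1)`, then for every integer `i ≥ 1` with `δ ≤ i^{α/β}`,
`P(S_i ≤ i^{1/β}) ≤ exp(-δ i^{γ})` with `γ = 1 - α/β > 0`. -/
theorem heavy_tail_sum_small_probability
    {Ω : Type*} [MeasurableSpace Ω] (P : Measure Ω) [IsProbabilityMeasure P]
    (δ α : ℝ) (hδ : 0 < δ) (hα : α ∈ Set.Ioo (0 : ℝ) 1)
    (ξ : ℕ → Ω → ℝ) (hmeas : ∀ j, Measurable (ξ j)) (hnonneg : ∀ j ω, 0 ≤ ξ j ω)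
    (hindep : iIndepFun ξ P)
    (htail : ∀ j, ∀ x : ℝ, 1 ≤ x →
      ENNReal.ofReal (δ * x ^ (-α)) ≤ P {ω | x < ξ j ω})
    (β : ℝ) (hβ : β ∈ Set.Ioo α 1) :
    ∀ i : ℕ, 1 ≤ i → δ ≤ (i : ℝ) ^ (α / β) →
      P {ω | ∑ j ∈ Finset.range i, ξ j ω ≤ (i : ℝ) ^ (1 / β)}
        ≤ ENNReal.ofReal (Real.exp (-δ * (i : ℝ) ^ (1 - α / β))) := by
  intro i hi hδi
  obtain ⟨hα0, hα1⟩ := hα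
  obtain ⟨hβα, hβ1⟩ := hβ
  have hβ0 : 0 < β := hα0.trans hβα
  have hi0 : (0:ℝ) < i := by exact_mod_cast hi
  set x : ℝ := (i:ℝ) ^ (1/β) with hx
  have hx1 : 1 ≤ x := Real.one_le_rpow (by exact_mod_cast hi) (by positivity)
  set c : ℝ := δ * (i:ℝ) ^ (-(α/β)) with hc
  have hc0 : 0 ≤ c := by positivity
  have hc1 : c ≤ 1 := by
    calc c ≤ (i:ℝ)^(α/β) * (i:ℝ)^(-(α/β)) :=
          mul_le_mul_of_nonneg_right hδi (by positivity)
      _ = 1 := by rw [← Real.rpow_add hi0]; simp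
  have hxc : δ * x ^ (-α) = c := by
    have hxe : x ^ (-α) = (i:ℝ) ^ (-(α/β)) := by
      rw [hx, ← Real.rpow_mul hi0.le]
      congr 1
      ring
    rw [hxe, hc]
  have hstep : ∀ j, P {ω | ξ j ω ≤ x} ≤ ENNReal.ofReal (1 - c) := by
    intro j
    have hcompl : {ω | ξ j ω ≤ x} = {ω | x < ξ j ω}ᶜ := by
      ext ω; simp [not_lt]
    have hmB : MeasurableSet {ω | x < ξ j ω} := measurableSet_lt measurable_const (hmeas j)
    rw [hcompl, prob_compl_eq_one_sub hmB]
    have ht := htail j x hx1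
    rw [hxc] at ht
    calc 1 - P {ω | x < ξ j ω} ≤ 1 - ENNReal.ofReal c := tsub_le_tsub_left ht 1
      _ = ENNReal.ofReal (1 - c) := by
          rw [← ENNReal.ofReal_one, ← ENNReal.ofReal_sub 1 hc0]
  have hsub : {ω | ∑ j ∈ Finset.range i, ξ j ω ≤ x} ⊆
      ⋂ j ∈ Finset.range i, {ω | ξ j ω ≤ x} := by
    intro ω hω
    simp only [Set.mem_setOf_eq] at hω
    simp only [Set.mem_iInter, Set.mem_setOf_eq]
    intro j hj
    exact le_trans (Finset.single_le_sum (fun k _ => hnonneg k ω) hj) hω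
  have hprod : P (⋂ j ∈ Finset.range i, {ω | ξ j ω ≤ x}) =
      ∏ j ∈ Finset.range i, P {ω | ξ j ω ≤ x} :=
    ProbabilityTheory.iIndep.meas_biInter hindep.iIndep
      (fun j _ => ⟨Set.Iic x, measurableSet_Iic, rfl⟩)
  have h4 : (i:ℝ)^(1 - α/β) = (i:ℝ)^(-(α/β)) * (i:ℝ) := by
    rw [show (1 - α/β) = -(α/β) + 1 by ring, Real.rpow_add hi0, Real.rpow_one]
  have hreal : (1 - c)^i ≤ Real.exp (-δ * (i:ℝ) ^ (1 - α/β)) := by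
    have h1 : (1 - c) ≤ Real.exp (-c) := by
      have := Real.add_one_le_exp (-c); linarith
    have h2 : (1-c)^i ≤ Real.exp (-c)^i := pow_le_pow_left₀ (by linarith) h1 i
    have h3 : Real.exp (-c)^i = Real.exp (-c * i) := by
      rw [← Real.exp_nat_mul]; congr 1; ring
    have h5 : -c * (i:ℝ) = -δ * (i:ℝ)^(1 - α/β) := by
      rw [h4, hc]; ring
    rw [h3, h5] at h2
    exact h2
  calc P {ω | ∑ j ∈ Finset.range i, ξ j ω ≤ x}
      ≤ P (⋂ j ∈ Finset.range i, {ω | ξ j ω ≤ x}) := measure_mono hsub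
    _ = ∏ j ∈ Finset.range i, P {ω | ξ j ω ≤ x} := hprod
    _ ≤ ∏ j ∈ Finset.range i, ENNReal.ofReal (1 - c) :=
        Finset.prod_le_prod' (fun j _ => hstep j)
    _ = ENNReal.ofReal ((1 - c)^i) := by
        rw [Finset.prod_const, Finset.card_range, ← ENNReal.ofReal_pow (by linarith)]
    _ ≤ ENNReal.ofReal (Real.exp (-δ * (i:ℝ) ^ (1 - α/β))) :=
        ENNReal.ofReal_le_ofReal hreal
end
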